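/- arXiv:math/0510431 — 4 statements merged into one kernel-verified Lean document; each statement's English description precedes it below -/
import Mathlib

section
/- Let p be a prime and let k, m be nonnegative integers with k < p^m. Then for every nonnegative integer n one has C(n + p^m, k) ≡ C(n, k) (mod p), where C denotes the binomial coefficient; that is, the value of C(n,k) modulo p is periodic in n with period the smallest power of p exceeding k. -/
/-- If `p` is a prime and `k < p^m`, then for every `n` one has
`C(n + p^m, k) ≡ C(n, k) (mod p)`: the binomial coefficient modulo `p` is periodic in
its upper entry with period the smallest power of `p` exceeding `k`. -/
theorem stmt_1 (p : ℕ) (hp : p.Prime) (k m : ℕ) (hk : k < p ^ m) (n : ℕ) :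
    (n + p ^ m).choose k ≡ n.choose k [MOD p] := by
  rw [← ZMod.natCast_eq_natCast_iff, Nat.add_choose_eq, Nat.cast_sum]
  rw [Finset.sum_eq_single ((k, 0) : ℕ × ℕ)]
  · simp
  · intro b hb hne
    rw [Finset.HasAntidiagonal.mem_antidiagonal] at hb
    have hb2 : b.2 ≠ 0 := by
      intro h0
      exact hne (Prod.ext (by omega) h0)
    have hb2' : b.2 ≠ p ^ m := fun he => absurd hk (by omega)
    have : ((p ^ m).choose b.2 : ZMod p) = 0 := by
      rw [ZMod.natCast_eq_zero_iff]
      exact hp.dvd_choose_pow hb2 hb2'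
    push_cast
    rw [this, mul_zero]
  · intro h
    exact absurd (Finset.HasAntidiagonal.mem_antidiagonal.mpr (by simp)) h
end

section
/- Let p be a prime, 0 ≤ a < b < n integers, and L = AF(a,b,n,p). Let D be an F_{p^n}-linear derivation of L. (i) If D e_ξ ∈ F_{p^n}·e_ξ for every ξ ∈ F_{p^n}, ξ ≠ 0, then there exists an additive map π: F_{p^n} → F_{p^n} such that D e_ξ = π(ξ)·e_ξ for all ξ ≠ 0; conversely, for every additive map π the linear map e_ξ ↦ π(ξ)·e_ξ is a derivation of L. (ii) If τ ∈ F_{p^n} with τ ≠ 0 and D e_ξ ∈ F_{p^n}·e_{ξ+τ} for every ξ ≠ 0 (where e_0 = 0), then D is a scalar multiple of the inner derivation ad(e_τ). -/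
/-- Derivations of the Albert–Frank algebra `L = AF(a,b,n,p)`.
(i) If a derivation `D` satisfies `D e_ξ ∈ K·e_ξ` for all `ξ ≠ 0`, then there is an
additive map `π : K → K` with `D e_ξ = π(ξ) • e_ξ` for all `ξ ≠ 0`; conversely, for any
additive `π` the linear map `e_ξ ↦ π(ξ) • e_ξ` is a derivation.
(ii) If `τ ≠ 0` and `D e_ξ ∈ K·e_{ξ+τ}` for all `ξ ≠ 0`, then `D` is a scalar multiple of
the inner derivation `ad(e_τ)`. -/
theorem stmt_3 (p a b n : ℕ) (hp : p.Prime) (hab : a < b) (hbn : b < n)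
    (K : Type*) [Field K] [Fintype K] (hK : Fintype.card K = p ^ n)
    (L : Type*) [LieRing L] [LieAlgebra K L]
    -- `E ξ` represents the basis element `e_ξ` (with `e_0 = 0`)
    (E : K → L) (hE0 : E 0 = 0)
    (B : Module.Basis {ξ : K // ξ ≠ 0} K L) (hB : ∀ ξ, B ξ = E ξ.1)
    (hbr : ∀ ξ η : K,
      ⁅E ξ, E η⁆ = (ξ ^ p ^ a * η ^ p ^ b - ξ ^ p ^ b * η ^ p ^ a) • E (ξ + η)) :
    -- (i), forward direction
    ((∀ D : LieDerivation K L L, (∀ ξ : K, ξ ≠ 0 → ∃ c : K, D (E ξ) = c • E ξ) →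
        ∃ π : K → K, (∀ ξ η : K, π (ξ + η) = π ξ + π η) ∧
          ∀ ξ : K, ξ ≠ 0 → D (E ξ) = π ξ • E ξ) ∧
      -- (i), converse direction
      (∀ π : K → K, (∀ ξ η : K, π (ξ + η) = π ξ + π η) →
        ∃ D : LieDerivation K L L, ∀ ξ : K, D (E ξ) = π ξ • E ξ) ∧
      -- (ii)
      (∀ D : LieDerivation K L L, ∀ τ : K, τ ≠ 0 →
        (∀ ξ : K, ξ ≠ 0 → ∃ c : K, D (E ξ) = c • E (ξ + τ)) →
        ∃ c : K, ∀ u : L, D u = c • ⁅E τ, u⁆)) := by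
  classical
  haveI hfact : Fact p.Prime := ⟨hp⟩
  haveI hchar : CharP K p := by
    haveI := ringChar.charP K
    obtain ⟨m, hq, hcard⟩ := FiniteField.card K (ringChar K)
    have hqp : ringChar K = p := by
      have h1 : ringChar K ∣ p ^ n := by
        rw [← hK, hcard]; exact dvd_pow_self _ (by exact_mod_cast m.ne_zero)
      exact (Nat.prime_dvd_prime_iff_eq hq hp).mp (hq.dvd_of_dvd_pow h1)
    rw [← hqp]; exact ringChar.charP K
  -- the structure constants
  set f : K → K → K := fun x y => x ^ p ^ a * y ^ p ^ b - x ^ p ^ b * y ^ p ^ a with hfdef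
  have hbr' : ∀ ξ η : K, ⁅E ξ, E η⁆ = f ξ η • E (ξ + η) := hbr
  have hfaddl : ∀ x x' y : K, f (x + x') y = f x y + f x' y := by
    intro x x' y
    show (x + x') ^ p ^ a * y ^ p ^ b - (x + x') ^ p ^ b * y ^ p ^ a = _
    rw [add_pow_char_pow, add_pow_char_pow]; ring
  have hfaddr : ∀ x y y' : K, f x (y + y') = f x y + f x y' := by
    intro x y y'
    show x ^ p ^ a * (y + y') ^ p ^ b - x ^ p ^ b * (y + y') ^ p ^ a = _
    rw [add_pow_char_pow, add_pow_char_pow]; ring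
  have hfanti : ∀ x y : K, f x y = -f y x := by intro x y; show _ - _ = -(_ - _); ring
  have hfself : ∀ x : K, f x x = 0 := by intro x; show _ - _ = (0:K); ring
  have hf0l : ∀ y : K, f 0 y = 0 := by
    intro y
    show (0:K) ^ p ^ a * y ^ p ^ b - (0:K) ^ p ^ b * y ^ p ^ a = 0
    rw [zero_pow (pow_ne_zero _ hp.ne_zero), zero_pow (pow_ne_zero _ hp.ne_zero)]; ring
  have hf0r : ∀ x : K, f x 0 = 0 := by
    intro x; rw [hfanti, hf0l]; ring
  have hfnegl : ∀ x y : K, f (-x) y = -f x y := by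
    intro x y
    have h := hfaddl x (-x) y
    rw [add_neg_cancel, hf0l] at h
    linear_combination -h
  have hfnegr : ∀ x y : K, f x (-y) = -f x y := by
    intro x y
    have h := hfaddr x y (-y)
    rw [add_neg_cancel, hf0r] at h
    linear_combination -h
  have hftrans : ∀ x y z : K, y ≠ 0 → f x y = 0 → f y z = 0 → f x z = 0 := by
    intro x y z hy h1 h2
    have key : y ^ p ^ a * y ^ p ^ b * f x z = 0 := by
      simp only [hfdef] at h1 h2 ⊢
      linear_combination (z ^ p ^ b * y ^ p ^ a) * h1 + (x ^ p ^ b * y ^ p ^ a) * h2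
    rcases mul_eq_zero.mp key with h | h
    · exact absurd h (mul_ne_zero (pow_ne_zero _ hy) (pow_ne_zero _ hy))
    · exact h
  have hL2 : ∀ γ : K, γ ≠ 0 → ∃ ζ : K, f γ ζ ≠ 0 := by
    intro γ hγ
    by_contra hcon
    push_neg at hcon
    simp only [hfdef] at hcon
    have h1 : γ ^ p ^ a = γ ^ p ^ b := by
      have := hcon 1; simp at this; linear_combination this
    have key : ∀ ζ : K, ζ ^ p ^ b = ζ ^ p ^ a := by
      intro ζ
      have h2 := hcon ζ
      rw [← h1] at h2
      have h3 : γ ^ p ^ a * (ζ ^ p ^ b - ζ ^ p ^ a) = 0 := by linear_combination h2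
      exact sub_eq_zero.mp ((mul_eq_zero.mp h3).resolve_left (pow_ne_zero _ hγ))
    obtain ⟨g, hg⟩ := IsCyclic.exists_generator (α := Kˣ)
    have horder : orderOf g = p ^ n - 1 := by
      rw [orderOf_eq_card_of_forall_mem_zpowers hg, Nat.card_units, Nat.card_eq_fintype_card, hK]
    have hgu : g ^ p ^ b = g ^ p ^ a := by ext; push_cast; exact key _
    have hqr : p ^ a ≤ p ^ b := Nat.pow_le_pow_right hp.pos hab.le
    have hone : g ^ (p ^ b - p ^ a) = 1 := by
      have h6 : g ^ (p ^ b - p ^ a) * g ^ p ^ a = 1 * g ^ p ^ a := by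
        rw [← pow_add, Nat.sub_add_cancel hqr, hgu, one_mul]
      exact mul_right_cancel h6
    have hdvd : p ^ n - 1 ∣ p ^ b - p ^ a := horder ▸ orderOf_dvd_of_pow_eq_one hone
    have hfact2 : p ^ b - p ^ a = p ^ a * (p ^ (b - a) - 1) := by
      have hpow : p ^ a * p ^ (b - a) = p ^ b := by rw [← pow_add]; congr 1; omega
      rw [Nat.mul_sub, mul_one, hpow]
    have hpn1 : 1 ≤ p ^ n := Nat.one_le_pow _ _ hp.pos
    have hpd : ¬ p ∣ p ^ n - 1 := by
      intro hd
      have h7 : p ∣ p ^ n := dvd_pow_self p (by omega)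
      have h8 : p ∣ p ^ n - (p ^ n - 1) := Nat.dvd_sub h7 hd
      have h9 : p ^ n - (p ^ n - 1) = 1 := by omega
      rw [h9] at h8
      exact hp.one_lt.ne' (Nat.dvd_one.mp h8)
    have hcop : Nat.Coprime (p ^ n - 1) (p ^ a) :=
      Nat.Coprime.pow_right _ ((hp.coprime_iff_not_dvd).mpr hpd).symm
    have hdvd2 : p ^ n - 1 ∣ p ^ (b - a) - 1 := by
      apply hcop.dvd_of_dvd_mul_left
      rw [← hfact2]
      exact hdvd
    have hba2 : 2 ≤ p ^ (b - a) := by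
      calc 2 ≤ p := hp.two_le
      _ = p ^ 1 := (pow_one p).symm
      _ ≤ p ^ (b - a) := Nat.pow_le_pow_right hp.pos (by omega)
    have hle : p ^ n - 1 ≤ p ^ (b - a) - 1 := Nat.le_of_dvd (by omega) hdvd2
    have hle2 : p ^ n ≤ p ^ (b - a) := by omega
    have : n ≤ b - a := (Nat.pow_le_pow_iff_right hp.one_lt).mp hle2
    omega
  have hEne : ∀ ζ : K, ζ ≠ 0 → E ζ ≠ 0 := by
    intro ζ h
    rw [← hB ⟨ζ, h⟩]
    exact B.ne_zero _
  have hcancel : ∀ (c d ζ : K), ζ ≠ 0 → c • E ζ = d • E ζ → c = d := by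
    intro c d ζ hζ h
    by_contra hne
    have h2 : (c - d) • E ζ = 0 := by rw [sub_smul, h, sub_self]
    apply hEne ζ hζ
    calc E ζ = (c - d)⁻¹ • ((c - d) • E ζ) := (inv_smul_smul₀ (sub_ne_zero.mpr hne) _).symm
    _ = 0 := by rw [h2, smul_zero]
  refine ⟨?_, ?_, ?_⟩
  · -- (i) forward
    intro D hD
    have hπex : ∃ π : K → K, π 0 = 0 ∧ ∀ ξ : K, D (E ξ) = π ξ • E ξ := by
      refine ⟨fun ξ => if h : ξ = 0 then 0 else Classical.choose (hD ξ h), dif_pos rfl, ?_⟩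
      intro ξ
      by_cases h : ξ = 0
      · simp [h, hE0]
      · simpa only [dif_neg h] using Classical.choose_spec (hD ξ h)
    obtain ⟨π, hπ0, hπ⟩ := hπex
    have hA : ∀ ξ η : K, f ξ η * π (ξ + η) = f ξ η * (π ξ + π η) := by
      intro ξ η
      by_cases hs : ξ + η = 0
      · have hf0 : f ξ η = 0 := by
          have hη : η = -ξ := by linear_combination hs
          rw [hη, hfnegr, hfself, neg_zero]
        rw [hf0, zero_mul, zero_mul]
      · have h1 : D ⁅E ξ, E η⁆ = (f ξ η * π (ξ + η)) • E (ξ + η) := by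
          rw [hbr', map_smul, hπ, mul_smul]
        have h2 : D ⁅E ξ, E η⁆ = (f ξ η * (π ξ + π η)) • E (ξ + η) := by
          rw [D.apply_lie_eq_add, hπ ξ, hπ η, lie_smul, smul_lie, hbr', smul_smul,
            smul_smul, ← add_smul]
          congr 1
          ring
        exact hcancel _ _ _ hs (h1.symm.trans h2)
    refine ⟨π, ?_, fun ξ _ => hπ ξ⟩
    intro ξ η
    by_cases hξ : ξ = 0
    · rw [hξ, zero_add, hπ0, zero_add]
    by_cases hη : η = 0
    · rw [hη, add_zero, hπ0, add_zero]
    by_cases hf : f ξ η = 0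
    · -- dependent case
      obtain ⟨ζ, hζ⟩ := hL2 ξ hξ
      have hηζ : f η ζ ≠ 0 := fun h0 => hζ (hftrans ξ η ζ hη hf h0)
      have hfζη : f ζ η ≠ 0 := by
        intro h0
        exact hηζ (by rw [hfanti η ζ, h0, neg_zero])
      have hfξζη : f (ξ + ζ) η ≠ 0 := by
        rw [hfaddl, hf, zero_add]; exact hfζη
      have e2 : π (ξ + ζ) = π ξ + π ζ := mul_left_cancel₀ hζ (hA ξ ζ)
      by_cases hs : ξ + η = 0
      · have e1 : π ((ξ + ζ) + η) = π (ξ + ζ) + π η := mul_left_cancel₀ hfξζη (hA (ξ + ζ) η)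
        have hidx : (ξ + ζ) + η = ζ := by rw [add_right_comm, hs, zero_add]
        rw [hidx] at e1
        rw [hs, hπ0]
        linear_combination e1 + e2
      · have hfsζ : f (ξ + η) ζ ≠ 0 := by
          intro h0
          have hd1 : f ζ (ξ + η) = 0 := by rw [hfanti, h0, neg_zero]
          have hd2 : f (ξ + η) ξ = 0 := by
            rw [hfaddl, hfself, zero_add, hfanti η ξ, hf, neg_zero]
          have hd3 : f ζ ξ = 0 := hftrans ζ (ξ + η) ξ hs hd1 hd2
          exact hζ (by rw [hfanti, hd3, neg_zero])
        have e1 : π ((ξ + η) + ζ) = π (ξ + η) + π ζ := mul_left_cancel₀ hfsζ (hA (ξ + η) ζ)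
        have e3 : π ((ξ + ζ) + η) = π (ξ + ζ) + π η := mul_left_cancel₀ hfξζη (hA (ξ + ζ) η)
        have hidx : (ξ + η) + ζ = (ξ + ζ) + η := by ring
        rw [hidx] at e1
        linear_combination -e1 + e3 + e2
    · exact mul_left_cancel₀ hf (hA ξ η)
  · -- (i) converse
    intro π hadd
    have hπ0 : π 0 = 0 := by
      have h := hadd 0 0
      rw [add_zero] at h
      linear_combination -h
    set Dlin : L →ₗ[K] L := B.constr K (fun i => π i.1 • E i.1) with hDlin
    have hDE : ∀ ξ : K, Dlin (E ξ) = π ξ • E ξ := by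
      intro ξ
      by_cases h : ξ = 0
      · rw [h, hE0, map_zero, smul_zero]
      · have h2 := B.constr_basis K (fun i => π i.1 • E i.1) ⟨ξ, h⟩
        rw [hB ⟨ξ, h⟩] at h2
        rw [hDlin]
        exact h2
    have key : ∀ u v : L, Dlin ⁅u, v⁆ = ⁅u, Dlin v⁆ - ⁅v, Dlin u⁆ := by
      let M1 : L →ₗ[K] L →ₗ[K] L := LinearMap.mk₂ K (fun u v => Dlin ⁅u, v⁆)
        (fun u u' v => by rw [add_lie, map_add])
        (fun c u v => by rw [smul_lie, map_smul])
        (fun u v v' => by rw [lie_add, map_add])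
        (fun c u v => by rw [lie_smul, map_smul])
      let M2 : L →ₗ[K] L →ₗ[K] L := LinearMap.mk₂ K (fun u v => ⁅u, Dlin v⁆ - ⁅v, Dlin u⁆)
        (fun u u' v => by rw [map_add, add_lie, lie_add]; abel)
        (fun c u v => by rw [map_smul, smul_lie, lie_smul, smul_sub])
        (fun u v v' => by rw [map_add, lie_add, add_lie]; abel)
        (fun c u v => by rw [map_smul, lie_smul, smul_lie, smul_sub])
      have hM : M1 = M2 := by
        apply B.ext
        intro i
        apply B.ext
        intro j
        show Dlin ⁅B i, B j⁆ = ⁅B i, Dlin (B j)⁆ - ⁅B j, Dlin (B i)⁆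
        rw [hB i, hB j, hbr' i.1 j.1, map_smul, hDE, hDE, hDE, lie_smul, lie_smul,
          hbr' i.1 j.1, hbr' j.1 i.1]
        rw [show j.1 + i.1 = i.1 + j.1 from add_comm _ _]
        rw [smul_smul, smul_smul, smul_smul, ← sub_smul]
        congr 1
        have h := hadd i.1 j.1
        linear_combination f i.1 j.1 * h + π i.1 * hfanti j.1 i.1
      intro u v
      exact DFunLike.congr_fun (DFunLike.congr_fun hM u) v
    exact ⟨⟨Dlin, key⟩, fun ξ => hDE ξ⟩
  · -- (ii)
    intro D τ hτ hD
    have hgex : ∃ g : K → K, g 0 = 0 ∧ g (-τ) = 0 ∧ ∀ ξ : K, D (E ξ) = g ξ • E (ξ + τ) := by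
      refine ⟨fun ξ => if h : ξ = 0 ∨ ξ + τ = 0 then 0
        else Classical.choose (hD ξ (fun h0 => h (Or.inl h0))), dif_pos (Or.inl rfl),
        dif_pos (Or.inr (by ring)), ?_⟩
      intro ξ
      by_cases h : ξ = 0 ∨ ξ + τ = 0
      · simp only [dif_pos h, zero_smul]
        rcases h with h | h
        · rw [h, hE0, map_zero]
        · have hξ0 : ξ ≠ 0 := by
            intro h0; rw [h0, zero_add] at h; exact hτ h
          obtain ⟨c, hc⟩ := hD ξ hξ0
          rw [hc, h, hE0, smul_zero]
      · simp only [dif_neg h]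
        exact Classical.choose_spec (hD ξ (fun h0 => h (Or.inl h0)))
    obtain ⟨g, hg0, hgτ, hg⟩ := hgex
    have hstar : ∀ u v : K, u + v + τ ≠ 0 →
        f u v * g (u + v) = g u * (f u v + f τ v) + g v * (f u v - f τ u) := by
      intro u v hadm
      have h1 : D ⁅E u, E v⁆ = (f u v * g (u + v)) • E (u + v + τ) := by
        rw [hbr', map_smul, hg, mul_smul]
      have h2 : D ⁅E u, E v⁆ =
          (g u * (f u v + f τ v) + g v * (f u v - f τ u)) • E (u + v + τ) := by
        rw [D.apply_lie_eq_add, hg u, hg v, lie_smul, smul_lie, hbr', hbr']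
        rw [show u + (v + τ) = u + v + τ from by ring, show u + τ + v = u + v + τ from by ring]
        rw [smul_smul, smul_smul, ← add_smul]
        congr 1
        rw [hfaddr u v τ, hfaddl u τ v]
        have h3 : f u τ = - f τ u := hfanti u τ
        linear_combination g v * h3
      exact hcancel _ _ _ hadm (h1.symm.trans h2)
    -- periodicity
    have hPm : ∀ ζ : K, f τ ζ ≠ 0 → g (ζ + -τ) = g ζ := by
      intro ζ hζ
      have hζ0 : ζ ≠ 0 := by intro h0; rw [h0, hf0r] at hζ; exact hζ rfl
      have e := hstar ζ (-τ) (by rw [show ζ + -τ + τ = ζ from by ring]; exact hζ0)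
      rw [hfnegr ζ τ, hfnegr τ τ, hfself τ, hgτ] at e
      have hanti := hfanti ζ τ
      have key : f τ ζ * g (ζ + -τ) = f τ ζ * g ζ := by
        linear_combination (g (ζ + -τ) - g ζ) * hanti + e
      exact mul_left_cancel₀ hζ key
    have hPp : ∀ ζ : K, f τ ζ ≠ 0 → g (ζ + τ) = g ζ := by
      intro ζ hζ
      have h1 : f τ (ζ + τ) ≠ 0 := by rw [hfaddr, hfself, add_zero]; exact hζ
      have h2 := hPm (ζ + τ) h1
      rw [show ζ + τ + -τ = ζ from by ring] at h2
      exact h2.symm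
    -- antisymmetry of g
    have hdag : ∀ ζ : K, f τ ζ ≠ 0 → g (-ζ) = - g ζ := by
      intro ζ hζ
      have e := hstar ζ (-ζ) (by rw [show ζ + -ζ + τ = τ from by ring]; exact hτ)
      rw [hfnegr ζ ζ, hfself ζ, hfnegr τ ζ] at e
      have key : f τ ζ * (g (-ζ) + g ζ) = f τ ζ * 0 := by linear_combination e
      have h5 := mul_left_cancel₀ hζ key
      linear_combination h5
    -- the proportionality relation
    have hR : ∀ ξ η : K, f τ ξ ≠ 0 → f τ η ≠ 0 → g ξ * f τ η = g η * f τ ξ := by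
      intro ξ η hx hy
      by_cases hF : f ξ η = 0
      · have hadm : ξ + η + τ ≠ 0 := by
          intro h0
          have hη' : η = -ξ + -τ := by linear_combination h0
          rw [hη', hfaddr, hfnegr, hfself, hfnegr] at hF
          apply hx
          have h7 : f ξ τ = 0 := by linear_combination -hF
          rw [hfanti τ ξ, h7, neg_zero]
        have e := hstar ξ η hadm
        rw [hF] at e
        linear_combination -e
      · by_cases hs : ξ + η = τ ∨ ξ + η = -τ
        · have hgmξ : f τ (-ξ) ≠ 0 := by rw [hfnegr]; exact neg_ne_zero.mpr hx
          have hgη : g η = - g ξ := by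
            rcases hs with h | h
            · have hη' : η = -ξ + τ := by linear_combination h
              rw [hη', hPp (-ξ) hgmξ, hdag ξ hx]
            · have hη' : η = -ξ + -τ := by linear_combination h
              rw [hη', hPm (-ξ) hgmξ, hdag ξ hx]
          have htη : f τ η = - f τ ξ := by
            rcases hs with h | h
            · have hη' : η = -ξ + τ := by linear_combination h
              rw [hη', hfaddr, hfnegr, hfself, add_zero]
            · have hη' : η = -ξ + -τ := by linear_combination h
              rw [hη', hfaddr, hfnegr, hfnegr, hfself, neg_zero, add_zero]
          rw [hgη, htη]; ring
        · push_neg at hs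
          obtain ⟨hs1, hs2⟩ := hs
          have hξτ : ξ + τ ≠ 0 := by
            intro h0
            apply hx
            rw [show ξ = -τ from by linear_combination h0, hfnegr, hfself, neg_zero]
          have hητ : η + τ ≠ 0 := by
            intro h0
            apply hy
            rw [show η = -τ from by linear_combination h0, hfnegr, hfself, neg_zero]
          have e1 := hstar ξ η (fun h0 => hs2 (by linear_combination h0))
          have e2 := hstar (ξ + η) (-η)
            (by rw [show ξ + η + -η + τ = ξ + τ from by ring]; exact hξτ)
          rw [show ξ + η + -η = ξ from by ring] at e2
          have hf2 : f (ξ + η) (-η) = -(f ξ η) := by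
            rw [hfnegr, hfaddl, hfself, add_zero]
          have hty : f τ (-η) = -(f τ η) := hfnegr τ η
          have hts : f τ (ξ + η) = f τ ξ + f τ η := hfaddr τ ξ η
          have hgN : g (-η) = -(g η) := hdag η hy
          have hgM : g (-ξ) = -(g ξ) := hdag ξ hx
          rw [hf2, hty, hts, hgN] at e2
          by_cases h2 : (2:K) = 0
          · -- characteristic 2
            have hS : f τ η * (g (ξ + η) - g ξ - g η) = 0 := by
              linear_combination e1 + e2 -
                (f ξ η * g (ξ + η) - f ξ η * g ξ - g η * f ξ η) * h2
            have hS' : g (ξ + η) = g ξ + g η := by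
              have h5 := (mul_eq_zero.mp hS).resolve_left hy
              linear_combination h5
            linear_combination -e1 + f ξ η * hS'
          · -- odd characteristic
            have e3 := hstar (ξ + η) (-ξ)
              (by rw [show ξ + η + -ξ + τ = η + τ from by ring]; exact hητ)
            rw [show ξ + η + -ξ = η from by ring] at e3
            have hf3 : f (ξ + η) (-ξ) = f ξ η := by
              rw [hfnegr, hfaddl, hfself, zero_add, hfanti η ξ, neg_neg]
            have htx : f τ (-ξ) = -(f τ ξ) := hfnegr τ ξ
            rw [hf3, htx, hts, hgM] at e3
            by_cases hxy : f τ ξ + f τ η = 0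
            · -- t ξ + t η = 0
              have e9adm : ξ + -η + τ ≠ 0 := by
                intro h0
                have h5 : f τ (ξ + -η) = f τ (-τ) := by
                  rw [show ξ + -η = -τ from by linear_combination h0]
                rw [hfaddr, hfnegr, hfnegr, hfself, neg_zero] at h5
                have h6 : (2:K) * f τ ξ = 0 := by linear_combination h5 + hxy
                rcases mul_eq_zero.mp h6 with h | h
                exacts [h2 h, hx h]
              have e9 := hstar ξ (-η) e9adm
              rw [hfnegr ξ η, hty, hgN] at e9
              have e10 := hstar (ξ + -η) η
                (by rw [show ξ + -η + η + τ = ξ + τ from by ring]; exact hξτ)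
              rw [show ξ + -η + η = ξ from by ring] at e10
              have hf10 : f (ξ + -η) η = f ξ η := by
                rw [hfaddl, hfnegl, hfself, neg_zero, add_zero]
              have ht10 : f τ (ξ + -η) = f τ ξ - f τ η := by rw [hfaddr, hfnegr]; ring
              rw [hf10, ht10] at e10
              have e11adm : ξ + -η + -ξ + τ ≠ 0 := by
                rw [show ξ + -η + -ξ + τ = -η + τ from by ring]
                intro h0
                apply hy
                have h5 : η = τ := by linear_combination -h0
                rw [h5, hfself]
              have e11 := hstar (ξ + -η) (-ξ) e11adm
              rw [show ξ + -η + -ξ = -η from by ring] at e11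
              have hf11 : f (ξ + -η) (-ξ) = -(f ξ η) := by
                rw [hfnegr, hfaddl, hfself, hfnegl, hfanti η ξ]; ring
              rw [hf11, htx, ht10, hgN, hgM] at e11
              have key : (4:K) * (f τ ξ) * (g ξ + g η) = 0 := by
                linear_combination -2 * e9 + e10 - e11 + (g (ξ + -η) + 3 * g ξ + g η) * hxy
              have h4 : (4:K) ≠ 0 := by
                intro h0
                have h22 : (2:K) * 2 = 4 := by norm_num
                rw [h0] at h22
                rcases mul_eq_zero.mp h22 with h | h
                exacts [h2 h, h2 h]
              have hAB : g ξ + g η = 0 := by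
                rcases mul_eq_zero.mp key with h | h
                · rcases mul_eq_zero.mp h with h' | h'
                  exacts [absurd h' h4, absurd h' hx]
                · exact h
              linear_combination g ξ * hxy - f τ ξ * hAB
            · -- t ξ + t η ≠ 0
              have key : 2 * (f τ ξ + f τ η) * (g ξ * f τ η - g η * f τ ξ) = 0 := by
                linear_combination -(f τ ξ + f τ η) * e1 + f τ ξ * e2 - f τ η * e3
              rcases mul_eq_zero.mp key with h | h
              · rcases mul_eq_zero.mp h with h' | h'
                exacts [absurd h' h2, absurd h' hxy]
              · linear_combination h
    -- assemble
    obtain ⟨ζ₀, hζ₀⟩ := hL2 τ hτ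
    set c : K := g ζ₀ / f τ ζ₀ with hcdef
    have hR0 : ∀ ξ : K, f τ ξ ≠ 0 → g ξ = c * f τ ξ := by
      intro ξ hx
      have h := hR ξ ζ₀ hx hζ₀
      rw [hcdef, div_mul_eq_mul_div, eq_div_iff hζ₀]
      linear_combination h
    have hall : ∀ ξ : K, g ξ = c * f τ ξ := by
      intro ξ
      by_cases hx : f τ ξ = 0
      · rw [hx, mul_zero]
        by_cases hξ0 : ξ = 0
        · rw [hξ0]; exact hg0
        by_cases hξτ : ξ = -τ
        · rw [hξτ]; exact hgτ
        · have hsum : f τ (ξ + ζ₀) ≠ 0 := by rw [hfaddr, hx, zero_add]; exact hζ₀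
          have hadm : ξ + ζ₀ + τ ≠ 0 := by
            intro h0
            apply hsum
            rw [show ξ + ζ₀ = -τ from by linear_combination h0, hfnegr, hfself, neg_zero]
          have e := hstar ξ ζ₀ hadm
          have hgsum : g (ξ + ζ₀) = c * (f τ ξ + f τ ζ₀) := by
            rw [← hfaddr]; exact hR0 (ξ + ζ₀) hsum
          have hgz : g ζ₀ = c * f τ ζ₀ := hR0 ζ₀ hζ₀
          have hkey : g ξ * (f ξ ζ₀ + f τ ζ₀) = 0 := by
            linear_combination -e + f ξ ζ₀ * hgsum - (f ξ ζ₀ - f τ ξ) * hgz +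
              c * (f τ ζ₀ + f ξ ζ₀) * hx
          have hne : f ξ ζ₀ + f τ ζ₀ ≠ 0 := by
            intro h0
            have hd1 : f (ξ + τ) ζ₀ = 0 := by rw [hfaddl]; exact h0
            have hd2 : f (ξ + τ) τ = 0 := by
              rw [hfaddl, hfself, add_zero, hfanti ξ τ, hx, neg_zero]
            have hξτ0 : ξ + τ ≠ 0 := fun h0' => hξτ (by linear_combination h0')
            have hd3 : f ζ₀ τ = 0 :=
              hftrans ζ₀ (ξ + τ) τ hξτ0 (by rw [hfanti, hd1, neg_zero]) hd2
            exact hζ₀ (by rw [hfanti, hd3, neg_zero])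
          exact (mul_eq_zero.mp hkey).resolve_right hne
      · exact hR0 ξ hx
    refine ⟨c, ?_⟩
    have hbasis : ∀ i : {ξ : K // ξ ≠ 0}, D (B i) = c • ⁅E τ, B i⁆ := by
      intro i
      rw [hB i, hg i.1, hall i.1, hbr' τ i.1,
        show τ + i.1 = i.1 + τ from add_comm _ _, smul_smul]
    have hD2 : (D : L →ₗ[K] L) = c • ((LieAlgebra.ad K L) (E τ)) := by
      apply B.ext
      intro i
      rw [LinearMap.smul_apply, LieAlgebra.ad_apply]
      exact hbasis i
    intro u
    have h6 := DFunLike.congr_fun hD2 u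
    simpa [LieAlgebra.ad_apply] using h6
end

section
/- Let p be a prime, 0 ≤ a < b < n integers, and L = AF(a,b,n,p). Then the quotient of the F_{p^n}-vector space of all F_{p^n}-linear derivations of L by the subspace ad(L) of inner derivations has dimension n over F_{p^n}; a basis is given by the classes of the n derivations D_s (0 ≤ s < n) defined on the basis by D_s(e_ξ) = ξ^{p^s}·e_ξ. -/
set_option linter.unusedSectionVars false

open Finset Polynomial

namespace AF

variable {K : Type*} [Field K] [Fintype K]

/-- structure constants of the Albert-Frank algebra -/
def cc (p a b : ℕ) (x y : K) : K := x ^ p ^ a * y ^ p ^ b - x ^ p ^ b * y ^ p ^ a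

section cc_basic

variable (p a b : ℕ)

lemma cc_self (x : K) : cc p a b x x = 0 := by simp [cc]; ring

lemma cc_skew (x y : K) : cc p a b x y = - cc p a b y x := by simp [cc]; ring

lemma cc_zero_left (hp : 0 < p) (y : K) : cc p a b 0 y = 0 := by
  rw [cc, zero_pow (pow_pos hp a).ne', zero_pow (pow_pos hp b).ne', zero_mul, zero_mul,
    sub_zero]

lemma cc_zero_right (hp : 0 < p) (x : K) : cc p a b x 0 = 0 := by
  rw [cc_skew, cc_zero_left p a b hp, neg_zero]

end cc_basic

section char

variable (p n : ℕ)

lemma charP (hp : p.Prime) (hn : 0 < n) (hK : Fintype.card K = p ^ n) : CharP K p := by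
  have h1 : ((p ^ n : ℕ) : K) = 0 := by rw [← hK]; exact FiniteField.cast_card_eq_zero K
  haveI : CharP K (ringChar K) := ringChar.charP K
  have hprime : (ringChar K).Prime := CharP.char_is_prime K (ringChar K)
  have hdvd : ringChar K ∣ p ^ n := (CharP.cast_eq_zero_iff K (ringChar K) (p ^ n)).mp h1
  have : ringChar K = p :=
    (Nat.prime_dvd_prime_iff_eq hprime hp).mp (hprime.dvd_of_dvd_pow hdvd)
  exact this ▸ ringChar.charP K

lemma pow_card_self (hp : p.Prime) (hn : 0 < n) (hK : Fintype.card K = p ^ n) (x : K) :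
    x ^ p ^ n = x := by
  rw [← hK]; exact FiniteField.pow_card x

end char

section charlemmas

variable (p : ℕ) [CharP K p] [Fact p.Prime]

lemma frob_inj (k : ℕ) : Function.Injective (fun x : K => x ^ p ^ k) := by
  intro u v h
  have h2 : (u - v) ^ p ^ k = 0 := by
    rw [sub_pow_char_pow]; simpa [sub_eq_zero] using h
  have h3 := (pow_eq_zero_iff (pow_pos (Fact.out : p.Prime).pos k).ne').mp h2
  exact sub_eq_zero.mp h3

lemma cc_add_right (a b : ℕ) (x y z : K) :
    cc p a b x (y + z) = cc p a b x y + cc p a b x z := by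
  simp [cc, add_pow_char_pow]; ring

lemma cc_add_left (a b : ℕ) (x y z : K) :
    cc p a b (x + y) z = cc p a b x z + cc p a b y z := by
  simp [cc, add_pow_char_pow]; ring

lemma cc_sub_right (a b : ℕ) (x y z : K) :
    cc p a b x (y - z) = cc p a b x y - cc p a b x z := by
  simp [cc, sub_pow_char_pow]; ring

lemma cc_neg_right (a b : ℕ) (x z : K) : cc p a b x (-z) = - cc p a b x z := by
  have := cc_sub_right p a b x 0 z
  simpa [cc_zero_right p a b (Fact.out : p.Prime).pos] using this

lemma cc_neg_left (a b : ℕ) (x z : K) : cc p a b (-x) z = - cc p a b x z := by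
  rw [cc_skew, cc_neg_right, cc_skew p a b z x]; ring

end charlemmas

section zeroiff

variable (p a b n : ℕ)

/-- characterization of vanishing of `cc` -/
lemma cc_zero_iff (hp : p.Prime) (hab : a < b) [CharP K p] [Fact p.Prime] {x : K} (hx : x ≠ 0)
    (y : K) : cc p a b x y = 0 ↔ (y / x) ^ p ^ (b - a) = y / x := by
  set s := y / x with hs
  have hy : y = s * x := (div_mul_cancel₀ y hx).symm
  have expand : cc p a b x y = x ^ p ^ a * x ^ p ^ b * (s ^ p ^ b - s ^ p ^ a) := by
    rw [hy]; simp [cc, mul_pow]; ring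
  have hxx : x ^ p ^ a * x ^ p ^ b ≠ 0 := mul_ne_zero (pow_ne_zero _ hx) (pow_ne_zero _ hx)
  have hkey : s ^ p ^ b = (s ^ p ^ (b - a)) ^ p ^ a := by
    rw [← pow_mul, ← pow_add, Nat.sub_add_cancel hab.le]
  constructor
  · intro h
    rw [expand, mul_eq_zero] at h
    rcases h with h | h
    · exact absurd h hxx
    · have h4 : s ^ p ^ b = s ^ p ^ a := sub_eq_zero.mp h
      rw [hkey] at h4
      exact frob_inj p a h4
  · intro h
    rw [expand, hkey, h]
    simp

lemma cc_trans (hp : p.Prime) (hab : a < b) [CharP K p] [Fact p.Prime]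
    {x y : K} (hx : x ≠ 0) (hy : y ≠ 0) (z : K)
    (hxy : cc p a b x y = 0) (hyz : cc p a b y z = 0) : cc p a b x z = 0 := by
  rw [cc_zero_iff p a b hp hab hx] at hxy
  rw [cc_zero_iff p a b hp hab hy] at hyz
  rw [cc_zero_iff p a b hp hab hx]
  have hzx : z / x = z / y * (y / x) := by field_simp
  rw [hzx, mul_pow, hxy, hyz]

/-- root-counting: solutions of `y^(p^k) = y` -/
lemma count_fix (hp : p.Prime) (k : ℕ) (hk : 0 < k) (s : Finset K)
    (hs : ∀ y ∈ s, y ^ p ^ k = y) : s.card ≤ p ^ k := by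
  classical
  set P : K[X] := X ^ p ^ k - X with hP
  have h1k : 1 < p ^ k := Nat.one_lt_pow (by omega) hp.one_lt
  have hdeg : P.natDegree = p ^ k := by
    rw [hP, natDegree_sub_eq_left_of_natDegree_lt] <;> simp [h1k]
  have hne : P ≠ 0 := by
    intro h; rw [h, natDegree_zero] at hdeg; omega
  have hsub : s ⊆ P.roots.toFinset := by
    intro y hy
    rw [Multiset.mem_toFinset, mem_roots hne]
    simp [IsRoot, hP, sub_eq_zero, hs y hy]
  calc s.card ≤ P.roots.toFinset.card := Finset.card_le_card hsub
    _ ≤ Multiset.card P.roots := Multiset.toFinset_card_le _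
    _ ≤ P.natDegree := card_roots' P
    _ = p ^ k := hdeg

lemma gcd_fix (hp : p.Prime) (hn : 0 < n) (hK : Fintype.card K = p ^ n) (e : ℕ) (y : K)
    (h : y ^ p ^ e = y) : y ^ p ^ Nat.gcd e n = y := by
  have hiter : ∀ (j : ℕ) (z : K), z ^ p ^ j = z → ∀ k, z ^ p ^ (j * k) = z := by
    intro j z hz k
    induction k with
    | zero => simp
    | succ k ih => rw [Nat.mul_succ, pow_add, pow_mul, ih, hz]
  suffices H : ∀ e' n' : ℕ, ∀ z : K, z ^ p ^ e' = z → z ^ p ^ n' = z →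
      z ^ p ^ Nat.gcd e' n' = z by
    exact H e n y h (pow_card_self p n hp hn hK y)
  intro e'
  induction e' using Nat.strong_induction_on with
  | _ e' ih =>
    intro n' z he hn'
    by_cases he0 : e' = 0
    · subst he0; simpa using hn'
    · have hr : z ^ p ^ (n' % e') = z := by
        have h1 : z ^ p ^ (e' * (n' / e')) = z := hiter _ _ he _
        have h2 : z ^ p ^ (e' * (n' / e') + n' % e') = z := by
          rw [Nat.div_add_mod]; exact hn'
        rw [pow_add, pow_mul, h1] at h2
        exact h2
      rw [Nat.gcd_rec]
      exact ih (n' % e') (Nat.mod_lt _ (Nat.pos_of_ne_zero he0)) e' z hr he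

lemma cc_exists (hp : p.Prime) (hab : a < b) (hbn : b < n) (hK : Fintype.card K = p ^ n)
    [CharP K p] [Fact p.Prime] {x : K} (hx : x ≠ 0) : ∃ z : K, cc p a b x z ≠ 0 := by
  by_contra h
  push_neg at h
  have hall : ∀ s : K, s ^ p ^ (b - a) = s := by
    intro s
    have h1 := (cc_zero_iff p a b hp hab hx (s * x)).mp (h _)
    rwa [mul_div_cancel_right₀ _ hx] at h1
  have hcard := count_fix p hp (b - a) (by omega) Finset.univ (fun y _ => hall y)
  rw [Finset.card_univ, hK] at hcard
  have hle : n ≤ b - a := (Nat.pow_le_pow_iff_right hp.one_lt).mp hcard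
  omega

lemma dich (hp : p.Prime) (hab : a < b) (hbn : b < n) (hK : Fintype.card K = p ^ n)
    [CharP K p] [Fact p.Prime] {μ x₀ : K} (hμ : μ ≠ 0) (hx₀ : cc p a b μ x₀ ≠ 0)
    (hcov : ∀ z : K, cc p a b μ z = 0 ∨ cc p a b μ (x₀ + z) = 0) :
    ∀ z : K, cc p a b μ z = 0 → z = 0 ∨ z = μ := by
  classical
  intro z hz
  set m := Nat.gcd (b - a) n with hm
  have he : 0 < b - a := by omega
  have hmdvd : m ∣ n := Nat.gcd_dvd_right _ _
  have hm1 : 0 < m := Nat.gcd_pos_of_pos_left _ he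
  have hmn : m < n := lt_of_le_of_lt (Nat.le_of_dvd he (Nat.gcd_dvd_left _ _)) (by omega)
  set A := Finset.univ.filter (fun w : K => cc p a b μ w = 0) with hA
  set A' := Finset.univ.filter (fun w : K => cc p a b μ (x₀ + w) = 0) with hA'
  have hAcard : A.card ≤ p ^ m := by
    have hsub : ∀ y ∈ A.image (· / μ), y ^ p ^ m = y := by
      intro y hy
      rw [Finset.mem_image] at hy
      obtain ⟨w, hw, rfl⟩ := hy
      have hcw : cc p a b μ w = 0 := (Finset.mem_filter.mp hw).2
      have h1 := (cc_zero_iff p a b hp hab hμ w).mp hcw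
      exact gcd_fix p n hp (by omega) hK (b - a) _ h1
    have hcard1 := count_fix p hp m hm1 _ hsub
    have hinj : (A.image (· / μ)).card = A.card :=
      Finset.card_image_of_injective _ (fun u v huv => by
        field_simp at huv; exact huv)
    omega
  have hdisj : Disjoint A A' := by
    rw [Finset.disjoint_left]
    intro w hw hw'
    have h1 := (Finset.mem_filter.mp hw).2
    have h2 := (Finset.mem_filter.mp hw').2
    apply hx₀
    have h3 : cc p a b μ x₀ = cc p a b μ (x₀ + w) - cc p a b μ w := by
      rw [cc_add_right]; ring
    rw [h3, h1, h2, sub_zero]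
  have hcards : A'.card = A.card := by
    apply Finset.card_bij (fun w _ => x₀ + w)
    · intro w hw
      simp only [hA, Finset.mem_filter, Finset.mem_univ, true_and]
      exact (Finset.mem_filter.mp hw).2
    · intro w1 h1 w2 h2 hee
      exact add_left_cancel hee
    · intro w hw
      refine ⟨w - x₀, ?_, by ring⟩
      simp only [hA', Finset.mem_filter, Finset.mem_univ, true_and]
      have h4 : x₀ + (w - x₀) = w := by ring
      rw [h4]
      exact (Finset.mem_filter.mp hw).2
  have hcover : (Finset.univ : Finset K) ⊆ A ∪ A' := by
    intro w _
    rcases hcov w with h | h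
    · exact Finset.mem_union_left _ (Finset.mem_filter.mpr ⟨Finset.mem_univ _, h⟩)
    · exact Finset.mem_union_right _ (Finset.mem_filter.mpr ⟨Finset.mem_univ _, h⟩)
  have hq : p ^ n ≤ 2 * p ^ m := by
    have h1 : Fintype.card K ≤ A.card + A'.card := by
      rw [← Finset.card_univ]
      exact le_trans (Finset.card_le_card hcover) (Finset.card_union_le _ _)
    rw [hK] at h1
    omega
  have h2m : 2 * m ≤ n := by
    obtain ⟨k, hk⟩ := hmdvd
    have hk2 : 2 ≤ k := by
      rcases k with _ | _ | k <;> omega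
    nlinarith
  have hnm1 : n ≤ m + 1 := by
    have h5 : p ^ n ≤ p ^ (m + 1) := by
      calc p ^ n ≤ 2 * p ^ m := hq
        _ ≤ p * p ^ m := Nat.mul_le_mul_right _ hp.two_le
        _ = p ^ (m + 1) := by ring
    exact (Nat.pow_le_pow_iff_right hp.one_lt).mp h5
  have hm1' : m = 1 := by omega
  have hn2 : n = 2 := by omega
  have hp2 : p = 2 := by
    rw [hn2, hm1'] at hq
    have := hp.two_le
    nlinarith
  have hA2 : A.card ≤ 2 := by
    rw [hp2, hm1'] at hAcard
    simpa using hAcard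
  by_contra hcon
  push_neg at hcon
  obtain ⟨hz0, hzμ⟩ := hcon
  have hsub3 : ({z, 0, μ} : Finset K) ⊆ A := by
    intro w hw
    simp only [Finset.mem_insert, Finset.mem_singleton] at hw
    simp only [hA, Finset.mem_filter, Finset.mem_univ, true_and]
    rcases hw with rfl | rfl | rfl
    · exact hz
    · exact cc_zero_right p a b hp.pos _
    · exact cc_self p a b _
  have hc3 : ({z, 0, μ} : Finset K).card = 3 := by
    rw [Finset.card_insert_of_notMem (by simp [hz0, hzμ]),
      Finset.card_insert_of_notMem (by simp [Ne.symm hμ]), Finset.card_singleton]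
  have := Finset.card_le_card hsub3
  omega

end zeroiff

section ppoly

variable (p n : ℕ)

lemma ppoly_eq_zero (hp : p.Prime) (hn : 0 < n) (hK : Fintype.card K = p ^ n)
    (γ : Fin n → K) (h : ∀ x : K, ∑ s, γ s * x ^ p ^ (s : ℕ) = 0) : ∀ s, γ s = 0 := by
  classical
  set P : K[X] := ∑ s : Fin n, C (γ s) * X ^ p ^ (s : ℕ) with hP
  have heval : ∀ x : K, P.eval x = 0 := by
    intro x
    rw [hP, eval_finset_sum]
    simpa using h x
  have hdeg : P.natDegree < Fintype.card K := by
    rw [hK]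
    have hle : P.natDegree ≤ p ^ (n - 1) := by
      apply natDegree_sum_le_of_forall_le
      intro s _
      calc (C (γ s) * X ^ p ^ (s : ℕ)).natDegree ≤ (X ^ p ^ (s : ℕ) : K[X]).natDegree :=
            natDegree_C_mul_le _ _
        _ = p ^ (s : ℕ) := natDegree_X_pow _
        _ ≤ p ^ (n - 1) := Nat.pow_le_pow_right hp.pos (by omega)
    calc P.natDegree ≤ p ^ (n - 1) := hle
      _ < p ^ n := Nat.pow_lt_pow_right hp.one_lt (by omega)
  have hP0 : P = 0 :=
    P.eq_zero_of_natDegree_lt_card_of_eval_eq_zero Function.injective_id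
      (fun i => heval i) (by simpa using hdeg)
  intro s
  have hc := congrArg (fun Q : K[X] => Q.coeff (p ^ (s : ℕ))) hP0
  simp only [hP, finset_sum_coeff, coeff_C_mul, coeff_X_pow, coeff_zero] at hc
  rw [Finset.sum_eq_single s] at hc
  · simpa using hc
  · intro s' _ hs'
    have hne2 : p ^ (s : ℕ) ≠ p ^ (s' : ℕ) := by
      intro hee
      exact hs' (Fin.ext (Nat.pow_right_injective hp.two_le hee.symm))
    simp [hne2]
  · intro hs; exact absurd (Finset.mem_univ s) hs

lemma additive_ppoly (hp : p.Prime) (hn : 0 < n) (hK : Fintype.card K = p ^ n)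
    (f : K → K) (hadd : ∀ x y, f (x + y) = f x + f y) :
    ∃ c : Fin n → K, ∀ x, f x = ∑ s, c s * x ^ p ^ (s : ℕ) := by
  classical
  haveI : Fact p.Prime := ⟨hp⟩
  haveI hchar : CharP K p := charP p n hp hn hK
  letI : Algebra (ZMod p) K := ZMod.algebra _ _
  have hsmul : ∀ (r : ZMod p) (x : K), r • x = (r.val : K) * x := by
    intro r x
    rw [ZMod.natCast_val]
    rfl
  have mkLin : ∀ (g : K → K), (∀ x y, g (x + y) = g x + g y) →
      ∃ F : K →ₗ[ZMod p] K, ∀ x, F x = g x := by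
    intro g hg
    let F' : K →+ K := AddMonoidHom.mk' g hg
    refine ⟨{ toFun := g, map_add' := hg, map_smul' := ?_ }, fun x => rfl⟩
    intro r x
    simp only [RingHom.id_apply]
    rw [hsmul, hsmul, ← nsmul_eq_mul, ← nsmul_eq_mul]
    exact F'.map_nsmul r.val x
  haveI : Module.Finite (ZMod p) K := by
    refine ⟨⟨Finset.univ, ?_⟩⟩
    rw [eq_top_iff]
    intro x _
    exact Submodule.subset_span (by simp)
  set d := Module.finrank (ZMod p) K with hd'
  have hcardK : Fintype.card K = p ^ d := by
    have b0 := Module.finBasis (ZMod p) K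
    rw [Module.card_fintype b0, ZMod.card]
    simp [hd']
  have hd : d = n := Nat.pow_right_injective hp.two_le (show p ^ d = p ^ n by rw [← hcardK, hK])
  let bK : Module.Basis (Fin n) (ZMod p) K := (Module.finBasis (ZMod p) K).reindex (finCongr hd)
  let Ψfun : (Fin n → K) → K → K := fun c x => ∑ s, c s * x ^ p ^ (s : ℕ)
  have Ψadd : ∀ c x y, Ψfun c (x + y) = Ψfun c x + Ψfun c y := by
    intro c x y
    simp only [Ψfun]
    rw [← Finset.sum_add_distrib]
    apply Finset.sum_congr rfl
    intro s _
    rw [add_pow_char_pow]; ring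
  choose ΨL hΨL using fun c => mkLin (Ψfun c) (Ψadd c)
  have hinj : Function.Injective ΨL := by
    intro c c' hcc
    have hz : ∀ x : K, ∑ s, (c s - c' s) * x ^ p ^ (s : ℕ) = 0 := by
      intro x
      have h1 : Ψfun c x = Ψfun c' x := by rw [← hΨL c x, ← hΨL c' x, hcc]
      calc ∑ s, (c s - c' s) * x ^ p ^ (s : ℕ)
          = Ψfun c x - Ψfun c' x := by
            simp only [Ψfun, sub_mul]
            rw [Finset.sum_sub_distrib]
        _ = 0 := by rw [h1, sub_self]
    have h2 := ppoly_eq_zero p n hp hn hK _ hz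
    funext s
    have := h2 s
    exact sub_eq_zero.mp this
  let e := bK.constr (ZMod p) (M' := K)
  have hinj2 : Function.Injective (fun c => e.symm (ΨL c)) :=
    fun c c' h => hinj (e.symm.injective h)
  have hsurj2 := Finite.injective_iff_surjective.mp hinj2
  obtain ⟨Ff, hFf⟩ := mkLin f hadd
  obtain ⟨c, hc⟩ := hsurj2 (e.symm Ff)
  have hΨF : ΨL c = Ff := e.symm.injective hc
  exact ⟨c, fun x => by rw [← hFf x, ← hΨF]; exact hΨL c x⟩

end ppoly

section funceq

variable (p a b n : ℕ)

lemma zero_case (hp : p.Prime) (hab : a < b) (hbn : b < n) (hK : Fintype.card K = p ^ n)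
    [CharP K p] [Fact p.Prime] (f : K → K) (hf0 : f 0 = 0)
    (hfe : ∀ ξ η : K, ξ ≠ 0 → η ≠ 0 → ξ + η ≠ 0 →
      cc p a b ξ η * (f (ξ + η) - f ξ - f η) = 0) :
    ∀ x y : K, f (x + y) = f x + f y := by
  have hppos := hp.pos
  have good : ∀ x y : K, cc p a b x y ≠ 0 → f (x + y) = f x + f y := by
    intro x y hc
    have hx : x ≠ 0 := by rintro rfl; exact hc (cc_zero_left p a b hppos y)
    have hy : y ≠ 0 := by rintro rfl; exact hc (cc_zero_right p a b hppos x)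
    have hxy : x + y ≠ 0 := by
      intro h0
      have hyx : y = -x := eq_neg_of_add_eq_zero_right h0
      rw [hyx] at hc
      exact hc (by rw [cc_neg_right, cc_self, neg_zero])
    rcases mul_eq_zero.mp (hfe x y hx hy hxy) with h2 | h2
    · exact absurd h2 hc
    · linear_combination h2
  intro x y
  by_cases hx : x = 0
  · subst hx; rw [zero_add, hf0, zero_add]
  by_cases hy : y = 0
  · subst hy; rw [add_zero, hf0, add_zero]
  by_cases hc : cc p a b x y ≠ 0
  · exact good x y hc
  push_neg at hc
  obtain ⟨z, hz⟩ := cc_exists p a b n hp hab hbn hK hx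
  have hz0 : z ≠ 0 := by rintro rfl; exact hz (cc_zero_right p a b hppos x)
  by_cases hxy : x + y = 0
  · have hyx : y = -x := eq_neg_of_add_eq_zero_right hxy
    rw [hxy, hf0, hyx]
    have hzx : cc p a b z x ≠ 0 := by
      rw [cc_skew p a b z x]; exact neg_ne_zero.mpr hz
    have e1 : f (z + x) = f z + f x := good z x hzx
    have e2 : f (z + x + -x) = f (z + x) + f (-x) := by
      apply good
      rw [cc_neg_right, cc_add_left, cc_self, add_zero, cc_skew p a b z x]
      simpa using hz
    have e3 : z + x + -x = z := by ring
    rw [e3] at e2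
    linear_combination e1 + e2
  · have hcyz : cc p a b y z ≠ 0 := by
      intro h0
      exact hz (cc_trans p a b hp hab hx hy z hc h0)
    have hcxyz : cc p a b (x + y) z ≠ 0 := by
      intro h0
      have h5 : cc p a b x (x + y) = 0 := by
        rw [cc_add_right, cc_self, zero_add]; exact hc
      exact hz (cc_trans p a b hp hab hx hxy z h5 h0)
    have hcx_yz : cc p a b x (y + z) ≠ 0 := by
      rw [cc_add_right, hc, zero_add]; exact hz
    have hyz0 : y + z ≠ 0 := by
      rintro h0; apply hcx_yz; rw [h0, cc_zero_right p a b hppos]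
    have hxyz0 : x + y + z ≠ 0 := by
      intro h0
      apply hcxyz
      have : z = -(x + y) := by linear_combination h0
      rw [this, cc_neg_right, cc_self, neg_zero]
    have e1 : f (x + y + z) = f (x + y) + f z := good (x + y) z hcxyz
    have e2 : f (x + (y + z)) = f x + f (y + z) := good x (y + z) hcx_yz
    have e3 : f (y + z) = f y + f z := good y z hcyz
    have e4 : x + (y + z) = x + y + z := by ring
    rw [e4, e3] at e2
    linear_combination e2 - e1

lemma mu_case (hp : p.Prime) (hab : a < b) (hbn : b < n) (hK : Fintype.card K = p ^ n)
    [CharP K p] [Fact p.Prime] {μ : K} (hμ : μ ≠ 0) (g : K → K) (hg0 : g 0 = 0)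
    (hgm : g (-μ) = 0)
    (hfe : ∀ ξ η : K, ξ ≠ 0 → η ≠ 0 → ξ + η + μ ≠ 0 →
      cc p a b ξ η * g (ξ + η) = g ξ * cc p a b (ξ + μ) η + g η * cc p a b ξ (η + μ)) :
    ∃ t : K, ∀ x, g x = t * cc p a b μ x := by
  have hppos := hp.pos
  obtain ⟨x₀, hx₀⟩ := cc_exists p a b n hp hab hbn hK hμ
  set t := g x₀ / cc p a b μ x₀ with ht
  have htx₀ : g x₀ = t * cc p a b μ x₀ := by rw [ht, div_mul_cancel₀ _ hx₀]
  have hne : ∀ {x : K}, cc p a b μ x ≠ 0 → x ≠ 0 := by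
    intro x hc h0
    rw [h0] at hc
    exact hc (cc_zero_right p a b hppos μ)
  have hccμμ : cc p a b μ (-μ) = 0 := by rw [cc_neg_right, cc_self, neg_zero]
  have hperiod : ∀ x : K, cc p a b μ (x + μ) = cc p a b μ x := by
    intro x; rw [cc_add_right, cc_self, add_zero]
  have tfe : ∀ ξ η : K, ξ ≠ 0 → η ≠ 0 → ξ + η + μ ≠ 0 →
      cc p a b ξ η * (g (ξ + η) - g ξ - g η)
        = cc p a b μ η * g ξ - cc p a b μ ξ * g η := by
    intro ξ η hξ hη hs
    have h1 := hfe ξ η hξ hη hs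
    rw [cc_add_left p a b ξ μ η, cc_add_right p a b ξ η μ, cc_skew p a b ξ μ] at h1
    linear_combination h1
  have step1 : ∀ x : K, cc p a b μ x ≠ 0 → g (x + μ) = g x := by
    intro x hc
    have hxμ : x + μ ≠ 0 := by
      intro h0
      apply hc
      rw [← hperiod x, h0, cc_zero_right p a b hppos]
    have h1 := tfe (-μ) (x + μ) (neg_ne_zero.mpr hμ) hxμ
      (by intro h0; apply hxμ; linear_combination h0)
    have e1 : -μ + (x + μ) = x := by ring
    rw [e1, hgm] at h1
    have e3 : cc p a b (-μ) (x + μ) = - cc p a b μ x := by rw [cc_neg_left, hperiod]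
    rw [hccμμ, e3, hperiod] at h1
    have h5 : cc p a b μ x * (g (x + μ) - g x) = 0 := by linear_combination h1
    rcases mul_eq_zero.mp h5 with h | h
    · exact absurd h hc
    · linear_combination h
  have addg : ∀ ξ η : K, cc p a b μ ξ ≠ 0 → cc p a b μ η ≠ 0 → cc p a b μ (ξ + η) ≠ 0 →
      g (ξ + η) = g ξ + g η := by
    intro ξ η h1 h2 h3
    have hξ := hne h1
    have hη := hne h2
    have hs1 : ξ + η + μ ≠ 0 := by
      intro h0
      apply h3
      have hh : ξ + η = -μ := by linear_combination h0
      rw [hh, hccμμ]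
    have hημ : η + μ ≠ 0 := by
      intro h0
      apply h2
      have hh : η = -μ := by linear_combination h0
      rw [hh, hccμμ]
    have hs2 : ξ + (η + μ) + μ ≠ 0 := by
      intro h0
      apply h3
      have hh : ξ + η = -μ + -μ := by linear_combination h0
      rw [hh, cc_add_right, hccμμ, add_zero]
    have ha := tfe ξ η hξ hη hs1
    have hb := tfe ξ (η + μ) hξ hημ hs2
    have r1 : ξ + (η + μ) = ξ + η + μ := by ring
    have r2 : cc p a b ξ (η + μ) = cc p a b ξ η - cc p a b μ ξ := by
      rw [cc_add_right, cc_skew p a b ξ μ]; ring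
    rw [r1, step1 (ξ + η) h3, step1 η h2, hperiod η, r2] at hb
    have hc' : cc p a b μ ξ * (g (ξ + η) - g ξ - g η) = 0 := by linear_combination ha - hb
    rcases mul_eq_zero.mp hc' with h | h
    · exact absurd h h1
    · linear_combination h
  have propg : ∀ ξ η : K, cc p a b μ ξ ≠ 0 → cc p a b μ η ≠ 0 → cc p a b μ (ξ + η) ≠ 0 →
      cc p a b μ η * g ξ = cc p a b μ ξ * g η := by
    intro ξ η h1 h2 h3
    have hξ := hne h1
    have hη := hne h2
    have hs1 : ξ + η + μ ≠ 0 := by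
      intro h0
      apply h3
      have hh : ξ + η = -μ := by linear_combination h0
      rw [hh, hccμμ]
    have ha := tfe ξ η hξ hη hs1
    rw [addg ξ η h1 h2 h3] at ha
    linear_combination -ha
  have pgood : ∀ x : K, cc p a b μ x ≠ 0 → g x = t * cc p a b μ x := by
    intro x hx
    by_cases hxx : cc p a b μ (x + x₀) ≠ 0
    · have h1 := propg x x₀ hx hx₀ hxx
      rw [htx₀] at h1
      apply mul_left_cancel₀ hx₀
      linear_combination h1
    · push_neg at hxx
      by_cases h2 : (2 : K) = 0
      · by_cases hz : ∃ z : K, cc p a b μ z ≠ 0 ∧ cc p a b μ (x₀ + z) ≠ 0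
        · obtain ⟨z, hz1, hz2⟩ := hz
          have hzx₀ : cc p a b μ (z + x₀) ≠ 0 := by rwa [add_comm z x₀]
          have hPz : g z = t * cc p a b μ z := by
            have h1 := propg z x₀ hz1 hx₀ hzx₀
            rw [htx₀] at h1
            apply mul_left_cancel₀ hx₀
            linear_combination h1
          have hxz : cc p a b μ (x + z) ≠ 0 := by
            intro h0
            apply hz2
            rw [cc_add_right] at h0 hxx ⊢
            have h6 : (2 : K) * cc p a b μ x = 0 := by rw [h2, zero_mul]
            linear_combination h0 + hxx - h6
          have h1 := propg x z hx hz1 hxz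
          rw [hPz] at h1
          apply mul_left_cancel₀ hz1
          linear_combination h1
        · push_neg at hz
          have hcov : ∀ z : K, cc p a b μ z = 0 ∨ cc p a b μ (x₀ + z) = 0 := by
            intro z
            by_cases h : cc p a b μ z = 0
            · exact Or.inl h
            · exact Or.inr (hz z h)
          have hd := dich p a b n hp hab hbn hK hμ hx₀ hcov
          rcases hd (x + x₀) hxx with h4 | h4
          · have hxeq : x = x₀ := by linear_combination h4 - x₀ * h2
            rw [hxeq, htx₀]
          · have hxeq : x = x₀ + μ := by linear_combination h4 - x₀ * h2
            rw [hxeq, step1 x₀ hx₀, htx₀, hperiod]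
      · have h2x₀ : cc p a b μ (x₀ + x₀) ≠ 0 := by
          rw [cc_add_right]
          intro h0
          have h5 : (2 : K) * cc p a b μ x₀ = 0 := by linear_combination h0
          rcases mul_eq_zero.mp h5 with h | h
          · exact h2 h
          · exact hx₀ h
        have hP2 : g (x₀ + x₀) = t * cc p a b μ (x₀ + x₀) := by
          rw [addg x₀ x₀ hx₀ hx₀ h2x₀, htx₀, cc_add_right]; ring
        have hx2 : cc p a b μ (x + (x₀ + x₀)) ≠ 0 := by
          rw [cc_add_right, cc_add_right]
          rw [cc_add_right] at hxx
          intro h0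
          apply hx₀
          linear_combination h0 - hxx
        have h1 := propg x (x₀ + x₀) hx h2x₀ hx2
        rw [hP2] at h1
        apply mul_left_cancel₀ h2x₀
        linear_combination h1
  refine ⟨t, fun x => ?_⟩
  by_cases hx0 : x = 0
  · rw [hx0, hg0, cc_zero_right p a b hppos, mul_zero]
  by_cases hgood : cc p a b μ x ≠ 0
  · exact pgood x hgood
  push_neg at hgood
  by_cases hxμ : x = -μ
  · rw [hxμ, hgm, hccμμ, mul_zero]
  obtain ⟨ξ, hξgood⟩ := cc_exists p a b n hp hab hbn hK hμ
  have hξ := hne hξgood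
  have hxξ : cc p a b μ (x - ξ) ≠ 0 := by
    rw [cc_sub_right, hgood, zero_sub]
    exact neg_ne_zero.mpr hξgood
  have hxξ0 : x - ξ ≠ 0 := hne hxξ
  have hcxξ : cc p a b ξ (x - ξ) ≠ 0 := by
    have e0 : cc p a b ξ (x - ξ) = cc p a b ξ x := by rw [cc_sub_right, cc_self, sub_zero]
    rw [e0]
    intro h0
    have h5 : cc p a b x ξ = 0 := by rw [cc_skew p a b x ξ, h0, neg_zero]
    exact hξgood (cc_trans p a b hp hab hμ hx0 ξ hgood h5)
  have hsum : ξ + (x - ξ) + μ ≠ 0 := by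
    intro h0
    apply hxμ
    linear_combination h0
  have ha := tfe ξ (x - ξ) hξ hxξ0 hsum
  have e1 : ξ + (x - ξ) = x := by ring
  rw [e1, pgood ξ hξgood, pgood (x - ξ) hxξ] at ha
  have h7 : cc p a b μ ξ + cc p a b μ (x - ξ) = 0 := by
    rw [← cc_add_right, e1]
    exact hgood
  have hgx : g x = t * cc p a b μ ξ + t * cc p a b μ (x - ξ) := by
    have h6 : cc p a b ξ (x - ξ)
        * (g x - t * cc p a b μ ξ - t * cc p a b μ (x - ξ)) = 0 := by
      linear_combination ha
    rcases mul_eq_zero.mp h6 with h | h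
    · exact absurd h hcxξ
    · linear_combination h
  rw [hgx, hgood, mul_zero]
  linear_combination t * h7

end funceq

end AF

attribute [local instance] LieRing.ofAssociativeRing

/-- For the Albert–Frank algebra `L = AF(a,b,n,p)`, the quotient of the
space of derivations of `L` by the inner derivations `ad(L)` has dimension `n` over
`F_{p^n}`; a basis is given by the classes of the `n` derivations `D_s` (`0 ≤ s < n`)
with `D_s(e_ξ) = ξ^{p^s} • e_ξ`. -/
theorem stmt_4 (p a b n : ℕ) (hp : p.Prime) (hab : a < b) (hbn : b < n)
    (K : Type*) [Field K] [Fintype K] (hK : Fintype.card K = p ^ n)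
    (L : Type*) [LieRing L] [LieAlgebra K L]
    -- `E ξ` represents the basis element `e_ξ` (with `e_0 = 0`)
    (E : K → L) (hE0 : E 0 = 0)
    (B : Module.Basis {ξ : K // ξ ≠ 0} K L) (hB : ∀ ξ, B ξ = E ξ.1)
    (hbr : ∀ ξ η : K,
      ⁅E ξ, E η⁆ = (ξ ^ p ^ a * η ^ p ^ b - ξ ^ p ^ b * η ^ p ^ a) • E (ξ + η)) :
    Module.finrank K
        ((LieDerivation K L L) ⧸ LinearMap.range (LieDerivation.ad K L).toLinearMap) = n ∧
      ∃ D : Fin n → LieDerivation K L L,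
        (∀ s : Fin n, ∀ ξ : K, D s (E ξ) = ξ ^ p ^ (s : ℕ) • E ξ) ∧
        ∃ Bq : Module.Basis (Fin n) K
            ((LieDerivation K L L) ⧸ LinearMap.range (LieDerivation.ad K L).toLinearMap),
          ∀ s : Fin n, Bq s = Submodule.Quotient.mk (D s) := by
  classical
  have hn2 : 2 ≤ n := by omega
  haveI hfact : Fact p.Prime := ⟨hp⟩
  haveI hchar : CharP K p := AF.charP p n hp (by omega) hK
  have hppos := hp.pos
  have hbr' : ∀ ξ η : K, ⁅E ξ, E η⁆ = AF.cc p a b ξ η • E (ξ + η) := by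
    intro ξ η; simp only [AF.cc]; exact hbr ξ η
  -- the derivations
  have hDl : ∀ s : Fin n, ∃ Dl : L →ₗ[K] L, ∀ z : K, Dl (E z) = z ^ p ^ (s : ℕ) • E z := by
    intro s
    refine ⟨B.constr K (fun σ => (σ.1 ^ p ^ (s : ℕ)) • B σ), ?_⟩
    intro z
    by_cases hz : z = 0
    · subst hz; rw [hE0]; simp
    · have hEz : B ⟨z, hz⟩ = E z := hB ⟨z, hz⟩
      rw [← hEz, B.constr_basis, hB]
  choose Dl hDlE using hDl
  have hleib : ∀ (s : Fin n) (u v : L), Dl s ⁅u, v⁆ = ⁅u, Dl s v⁆ - ⁅v, Dl s u⁆ := by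
    intro s
    have key : ∀ σ τ : {ξ : K // ξ ≠ 0},
        Dl s ⁅B σ, B τ⁆ = ⁅Dl s (B σ), B τ⁆ + ⁅B σ, Dl s (B τ)⁆ := by
      intro σ τ
      rw [hB σ, hB τ, hbr' σ.1 τ.1, map_smul, hDlE s (σ.1 + τ.1), hDlE s σ.1, hDlE s τ.1,
        smul_lie, lie_smul, hbr' σ.1 τ.1]
      rw [smul_smul, smul_smul, smul_smul, ← add_smul]
      congr 1
      rw [add_pow_char_pow]
      ring
    have Br : L →ₗ[K] Module.End K L := (LieModule.toEnd K L L).toLinearMap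
    have main : LinearMap.compr₂ ((LieModule.toEnd K L L).toLinearMap) (Dl s)
        = ((LieModule.toEnd K L L).toLinearMap ∘ₗ (Dl s))
          + LinearMap.compl₂ ((LieModule.toEnd K L L).toLinearMap) (Dl s) := by
      apply B.ext; intro σ
      apply LinearMap.ext; intro x
      have main2 : ∀ τ : {ξ : K // ξ ≠ 0},
          (LinearMap.compr₂ ((LieModule.toEnd K L L).toLinearMap) (Dl s)) (B σ) (B τ)
          = (((LieModule.toEnd K L L).toLinearMap ∘ₗ (Dl s))
            + LinearMap.compl₂ ((LieModule.toEnd K L L).toLinearMap) (Dl s)) (B σ) (B τ) := by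
        intro τ
        simp only [LinearMap.compr₂_apply, LinearMap.add_apply, LinearMap.comp_apply,
          LinearMap.compl₂_apply, LieHom.coe_toLinearMap, LieModule.toEnd_apply_apply]
        exact key σ τ
      exact LinearMap.congr_fun (B.ext main2) x
    intro u v
    have h1 := LinearMap.congr_fun (LinearMap.congr_fun main u) v
    simp only [LinearMap.compr₂_apply, LinearMap.add_apply, LinearMap.comp_apply,
      LinearMap.compl₂_apply, LieHom.coe_toLinearMap, LieModule.toEnd_apply_apply] at h1
    rw [h1, ← lie_skew v (Dl s u)]
    abel
  let DD : Fin n → LieDerivation K L L := fun s => ⟨Dl s, hleib s⟩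
  have hDDE : ∀ (s : Fin n) (z : K), DD s (E z) = z ^ p ^ (s : ℕ) • E z := fun s z => hDlE s z
  -- coordinate machinery
  obtain ⟨ρ, hρval, hρ0⟩ : ∃ ρ : L → K → K,
      (∀ (u : L) (σ : K) (hσ : σ ≠ 0), ρ u σ = B.repr u ⟨σ, hσ⟩) ∧ (∀ u : L, ρ u 0 = 0) :=
    ⟨fun u σ => if h : σ = 0 then 0 else B.repr u ⟨σ, h⟩,
      fun u σ hσ => dif_neg hσ, fun u => dif_pos rfl⟩
  have coordE : ∀ (z : K) (τ : {ξ : K // ξ ≠ 0}),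
      B.repr (E z) τ = if z = τ.1 then 1 else 0 := by
    intro z τ
    by_cases hz : z = 0
    · subst hz
      rw [hE0, map_zero]
      rw [if_neg (fun h => τ.2 h.symm)]
      simp
    · have hEz : B ⟨z, hz⟩ = E z := hB ⟨z, hz⟩
      rw [← hEz, B.repr_self, Finsupp.single_apply]
      simp [Subtype.ext_iff]
  have coordBr : ∀ (u : L) (η : K) (τ : {ξ : K // ξ ≠ 0}),
      B.repr ⁅u, E η⁆ τ = ρ u (τ.1 - η) * AF.cc p a b (τ.1 - η) η := by
    intro u η τ
    set l : L →ₗ[K] K :=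
      (B.coord τ) ∘ₗ ((LieModule.toEnd K L L).toLinearMap.flip (E η)) with hldef
    have hl : ∀ v : L, l v = B.repr ⁅v, E η⁆ τ := by
      intro v
      simp [hldef, LinearMap.flip_apply, Module.Basis.coord_apply, LieModule.toEnd_apply_apply]
    have h1 : l u = ∑ i : {ξ : K // ξ ≠ 0}, B.repr u i • l (B i) := by
      conv_lhs => rw [← B.sum_repr u]
      rw [map_sum]
      simp only [map_smul, smul_eq_mul]
    have h2 : ∀ i : {ξ : K // ξ ≠ 0},
        l (B i) = AF.cc p a b i.1 η * (if i.1 + η = τ.1 then 1 else 0) := by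
      intro i
      rw [hl, hB, hbr', map_smul, Finsupp.smul_apply, smul_eq_mul, coordE]
    have h3 : l u = ∑ i : {ξ : K // ξ ≠ 0},
        B.repr u i * (AF.cc p a b i.1 η * (if i.1 + η = τ.1 then 1 else 0)) := by
      rw [h1]
      apply Finset.sum_congr rfl
      intro i _
      rw [h2 i, smul_eq_mul]
    by_cases hτη : τ.1 - η = 0
    · rw [← hl u, h3, hτη, hρ0 u, zero_mul]
      apply Finset.sum_eq_zero
      intro i _
      have hni : ¬(i.1 + η = τ.1) := by
        intro h0
        exact i.2 (by rw [eq_sub_of_add_eq h0, hτη])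
      simp [hni]
    · rw [← hl u, h3]
      rw [Finset.sum_eq_single (⟨τ.1 - η, hτη⟩ : {ξ : K // ξ ≠ 0})]
      · simp only [sub_add_cancel, if_true]
        rw [hρval u _ hτη]
        ring
      · intro i _ hi
        have hni : ¬(i.1 + η = τ.1) := by
          intro h0
          exact hi (Subtype.ext (eq_sub_of_add_eq h0))
        simp [hni]
      · intro h
        exact absurd (Finset.mem_univ _) h
  have hadE : ∀ (w v : L), (LieDerivation.ad K L w) v = ⁅w, v⁆ := by
    intro w v
    have h2 := LinearMap.congr_fun (LieDerivation.coe_ad_apply_eq_ad_apply (R := K) w) v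
    rw [LieAlgebra.ad_apply] at h2
    exact h2
  have hsumeval : ∀ (γ : Fin n → K) (v : L),
      (∑ s, γ s • DD s) v = ∑ s, γ s • (DD s v) := by
    intro γ v
    have h1 : ⇑(∑ s, γ s • DD s) = ∑ s, ⇑(γ s • DD s) :=
      map_sum (LieDerivation.coeFnAddMonoidHom) _ _
    calc (∑ s, γ s • DD s) v = (∑ s : Fin n, ⇑(γ s • DD s)) v := by rw [h1]
      _ = ∑ s, (γ s • DD s) v := by rw [Finset.sum_apply]
      _ = ∑ s, γ s • (DD s v) := by
          apply Finset.sum_congr rfl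
          intro s _
          rw [LieDerivation.smul_apply]
  set Rng := LinearMap.range (LieDerivation.ad K L).toLinearMap with hRng
  -- spanning
  have hspan : ∀ Dd : LieDerivation K L L, ∃ (γ : Fin n → K) (w : L),
      Dd = (∑ s, γ s • DD s) + LieDerivation.ad K L w := by
    intro Dd
    obtain ⟨d, hdρ⟩ : ∃ d : K → K → K, ∀ x σ : K, d x σ = ρ (Dd (E x)) σ :=
      ⟨fun x σ => ρ (Dd (E x)) σ, fun x σ => rfl⟩
    have hdval : ∀ (x σ : K) (hσ : σ ≠ 0), d x σ = B.repr (Dd (E x)) ⟨σ, hσ⟩ := by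
      intro x σ hσ
      rw [hdρ, hρval _ _ hσ]
    have hdval0 : ∀ x : K, d x 0 = 0 := by
      intro x
      rw [hdρ, hρ0]
    obtain ⟨g, hgval⟩ : ∃ g : K → K → K, ∀ μ x : K, g μ x = d x (x + μ) :=
      ⟨fun μ x => d x (x + μ), fun μ x => rfl⟩
    have hME : ∀ ξ η τ : K, ξ ≠ 0 → η ≠ 0 → ∀ hτ : τ ≠ 0,
        AF.cc p a b ξ η * d (ξ + η) τ
          = d ξ (τ - η) * AF.cc p a b (τ - η) η + d η (τ - ξ) * AF.cc p a b ξ (τ - ξ) := by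
      intro ξ η τ hξ hη hτ
      have h1 := Dd.apply_lie_eq_sub (E ξ) (E η)
      rw [hbr' ξ η, map_smul] at h1
      have h2 := congrArg (fun v : L => B.repr v ⟨τ, hτ⟩) h1
      have hL : B.repr (AF.cc p a b ξ η • Dd (E (ξ + η))) ⟨τ, hτ⟩
          = AF.cc p a b ξ η * d (ξ + η) τ := by
        rw [map_smul, Finsupp.smul_apply, smul_eq_mul]
        congr 1
        exact (hdval (ξ + η) τ hτ).symm
      have hR1 : B.repr ⁅E ξ, Dd (E η)⁆ ⟨τ, hτ⟩
          = d η (τ - ξ) * AF.cc p a b ξ (τ - ξ) := by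
        rw [← lie_skew, map_neg, Finsupp.neg_apply, coordBr (Dd (E η)) ξ ⟨τ, hτ⟩]
        rw [← hdρ η (τ - ξ), AF.cc_skew p a b ξ (τ - ξ)]
        ring
      have hR2 : B.repr ⁅E η, Dd (E ξ)⁆ ⟨τ, hτ⟩
          = - (d ξ (τ - η) * AF.cc p a b (τ - η) η) := by
        rw [← lie_skew, map_neg, Finsupp.neg_apply, coordBr (Dd (E ξ)) η ⟨τ, hτ⟩]
        rw [← hdρ ξ (τ - η)]
      rw [map_sub, Finsupp.sub_apply, hL, hR1, hR2] at h2
      linear_combination h2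
    have hFE : ∀ (μ ξ η : K), ξ ≠ 0 → η ≠ 0 → ξ + η + μ ≠ 0 →
        AF.cc p a b ξ η * g μ (ξ + η)
          = g μ ξ * AF.cc p a b (ξ + μ) η + g μ η * AF.cc p a b ξ (η + μ) := by
      intro μ ξ η hξ hη hs
      have h1 := hME ξ η (ξ + η + μ) hξ hη hs
      have e1 : ξ + η + μ - η = ξ + μ := by ring
      have e2 : ξ + η + μ - ξ = η + μ := by ring
      rw [e1, e2] at h1
      rw [hgval μ (ξ + η), hgval μ ξ, hgval μ η]
      exact h1
    have hg00 : ∀ μ : K, g μ 0 = 0 := by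
      intro μ
      rw [hgval μ 0]
      by_cases h0 : (0 : K) + μ = 0
      · rw [h0, hdval0]
      · rw [hdval 0 _ h0, hE0, map_zero]
        simp
    have hgm : ∀ μ : K, g μ (-μ) = 0 := by
      intro μ
      rw [hgval μ (-μ), show -μ + μ = (0 : K) from by ring, hdval0]
    have hf' : ∀ ξ η : K, ξ ≠ 0 → η ≠ 0 → ξ + η ≠ 0 →
        AF.cc p a b ξ η * (g 0 (ξ + η) - g 0 ξ - g 0 η) = 0 := by
      intro ξ η hξ hη hs
      have h1 := hFE 0 ξ η hξ hη (by rwa [add_zero])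
      rw [add_zero, add_zero] at h1
      linear_combination h1
    have hadd := AF.zero_case p a b n hp hab hbn hK (g 0) (hg00 0) hf'
    obtain ⟨γ, hγ⟩ := AF.additive_ppoly p n hp (by omega) hK (g 0) hadd
    have hT : ∀ σ : {ξ : K // ξ ≠ 0}, ∃ t : K, ∀ x, g σ.1 x = t * AF.cc p a b σ.1 x := by
      intro σ
      exact AF.mu_case p a b n hp hab hbn hK σ.2 (g σ.1) (hg00 σ.1) (hgm σ.1)
        (fun ξ η hξ hη hs => hFE σ.1 ξ η hξ hη hs)
    choose T hTspec using hT
    refine ⟨γ, ∑ σ, T σ • B σ, ?_⟩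
    set w := ∑ σ : {ξ : K // ξ ≠ 0}, T σ • B σ with hw
    have hreprw : ∀ σ : {ξ : K // ξ ≠ 0}, B.repr w σ = T σ := by
      intro σ
      rw [hw]
      exact congrFun (B.repr_sum_self T) σ
    have hmain : ∀ σ : {ξ : K // ξ ≠ 0},
        Dd (B σ) = ((∑ s, γ s • DD s) + LieDerivation.ad K L w) (B σ) := by
      intro σ
      have hξ : σ.1 ≠ 0 := σ.2
      rw [hB σ]
      apply B.ext_elem
      intro τ
      have hRHSv : ((∑ s, γ s • DD s) + LieDerivation.ad K L w) (E σ.1)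
          = (∑ s, γ s * σ.1 ^ p ^ (s : ℕ)) • E σ.1 + ⁅w, E σ.1⁆ := by
        rw [LieDerivation.add_apply, hsumeval γ (E σ.1), hadE]
        congr 1
        rw [Finset.sum_smul]
        apply Finset.sum_congr rfl
        intro s _
        rw [hDDE s σ.1, smul_smul]
      rw [hRHSv, map_add, Finsupp.add_apply, map_smul, Finsupp.smul_apply, smul_eq_mul,
        coordE σ.1 τ, coordBr w σ.1 τ]
      by_cases hcase : τ.1 = σ.1
      · have hτσ : τ = σ := Subtype.ext hcase
        rw [hτσ]
        have hL : B.repr (Dd (E σ.1)) σ = g 0 σ.1 := by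
          rw [hgval 0 σ.1, add_zero, hdval σ.1 σ.1 σ.2]
        rw [hL, hγ σ.1, if_pos rfl, show σ.1 - σ.1 = 0 from by ring, hρ0 w]
        ring
      · have hμ0 : τ.1 - σ.1 ≠ 0 := sub_ne_zero.mpr hcase
        have hL : g (τ.1 - σ.1) σ.1 = B.repr (Dd (E σ.1)) τ := by
          rw [hgval (τ.1 - σ.1) σ.1, show σ.1 + (τ.1 - σ.1) = τ.1 from by ring,
            hdval σ.1 τ.1 τ.2]
        rw [← hL, hTspec ⟨τ.1 - σ.1, hμ0⟩ σ.1]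
        rw [if_neg (fun h => hcase h.symm)]
        rw [hρval w _ hμ0, hreprw ⟨τ.1 - σ.1, hμ0⟩]
        ring
    have hlin : (Dd : L →ₗ[K] L)
        = (((∑ s, γ s • DD s) + LieDerivation.ad K L w : LieDerivation K L L) : L →ₗ[K] L) :=
      B.ext hmain
    apply LieDerivation.ext
    intro x
    exact LinearMap.congr_fun hlin x
  -- independence
  have hindep : ∀ γ : Fin n → K, (∑ s, γ s • DD s) ∈ Rng → ∀ s, γ s = 0 := by
    intro γ hmem
    obtain ⟨w, hwq⟩ := hmem
    have hwq' : LieDerivation.ad K L w = ∑ s, γ s • DD s := hwq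
    apply AF.ppoly_eq_zero p n hp (by omega) hK γ
    intro x
    by_cases hx : x = 0
    · subst hx
      apply Finset.sum_eq_zero
      intro s _
      rw [zero_pow (pow_pos hppos _).ne', mul_zero]
    · have h1 := congrArg (fun D : LieDerivation K L L => B.repr (D (E x)) ⟨x, hx⟩) hwq'
      rw [hadE, coordBr w x ⟨x, hx⟩, hsumeval] at h1
      have hRHS : B.repr (∑ s, γ s • DD s (E x)) ⟨x, hx⟩
          = ∑ s, γ s * x ^ p ^ (s : ℕ) := by
        rw [map_sum, Finsupp.finset_sum_apply]
        apply Finset.sum_congr rfl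
        intro s _
        rw [hDDE s x, map_smul, Finsupp.smul_apply, smul_eq_mul, map_smul,
          Finsupp.smul_apply, smul_eq_mul, coordE x ⟨x, hx⟩, if_pos rfl]
        ring
      rw [hRHS] at h1
      rw [show x - x = 0 from by ring, hρ0 w, zero_mul] at h1
      exact h1.symm
  -- assemble quotient basis
  let v : Fin n → ((LieDerivation K L L) ⧸ Rng) := fun s => Submodule.Quotient.mk (DD s)
  have hli : LinearIndependent K v := by
    rw [Fintype.linearIndependent_iff]
    intro γ hγ0
    have h2 : ∑ s, γ s • v s = Rng.mkQ (∑ s, γ s • DD s) := by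
      rw [map_sum]
      apply Finset.sum_congr rfl
      intro s _
      rw [map_smul, Submodule.mkQ_apply]
    rw [h2] at hγ0
    have h3 : (∑ s, γ s • DD s) ∈ Rng := by
      rwa [Submodule.mkQ_apply, Submodule.Quotient.mk_eq_zero] at hγ0
    exact hindep γ h3
  have hsp : ⊤ ≤ Submodule.span K (Set.range v) := by
    intro x _
    obtain ⟨Dd, rfl⟩ := Rng.mkQ_surjective x
    obtain ⟨γ, w, hDd⟩ := hspan Dd
    rw [hDd, map_add]
    have hz : Rng.mkQ (LieDerivation.ad K L w) = 0 := by
      rw [Submodule.mkQ_apply, Submodule.Quotient.mk_eq_zero]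
      exact ⟨w, rfl⟩
    rw [hz, add_zero, map_sum]
    apply Submodule.sum_mem
    intro s _
    rw [map_smul]
    apply Submodule.smul_mem
    apply Submodule.subset_span
    exact ⟨s, rfl⟩
  let Bq := Module.Basis.mk hli hsp
  refine ⟨?_, DD, ?_, Bq, ?_⟩
  · rw [Module.finrank_eq_card_basis Bq, Fintype.card_fin]
  · intro s ξ
    exact hDDE s ξ
  · intro s
    rw [Module.Basis.mk_apply]
end

section
/- Let F be a field of characteristic 2, let (n₁,n₂) be positive integers, and let L = H(2:(n₁,n₂);ω₂) over F. Then every 2-cocycle of L with values in the trivial module F is a 2-coboundary; that is, H²(L,F) = 0. -/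
/-- Integer binomial coefficient, zero when either entry is negative. -/
def ichoose (n k : ℤ) : ℤ := if 0 ≤ n ∧ 0 ≤ k then (n.toNat.choose k.toNat : ℤ) else 0

/-- The structure constant `N(i,j,k,l)` of the Hamiltonian algebra `H(2:(n₁,n₂);ω₂)`. -/
def hamN (i j k l : ℤ) : ℤ :=
  ichoose (i + k - 1) i * ichoose (j + l - 1) (j - 1) -
    ichoose (i + k - 1) (i - 1) * ichoose (j + l - 1) j

/-- A 2-cocycle of a Lie algebra `L` with values in the trivial module `F`:
an alternating bilinear map satisfying the cocycle identity. -/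
def IsTwoCocycle {F L : Type*} [Field F] [LieRing L] [LieAlgebra F L]
    (φ : L →ₗ[F] L →ₗ[F] F) : Prop :=
  (∀ u : L, φ u u = 0) ∧ ∀ u v w : L, φ ⁅u, v⁆ w + φ ⁅v, w⁆ u + φ ⁅w, u⁆ v = 0

/-- A 2-coboundary: a bilinear map of the form `(u,v) ↦ f ⁅u,v⁆`. -/
def IsTwoCoboundary {F L : Type*} [Field F] [LieRing L] [LieAlgebra F L]
    (φ : L →ₗ[F] L →ₗ[F] F) : Prop :=
  ∃ f : L →ₗ[F] F, ∀ u v : L, φ u v = f ⁅u, v⁆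

section IchooseLemmas

lemma ichoose_neg_left {n k : ℤ} (h : n < 0) : ichoose n k = 0 := by
  rw [ichoose, if_neg]; omega

lemma ichoose_neg_right {n k : ℤ} (h : k < 0) : ichoose n k = 0 := by
  rw [ichoose, if_neg]; omega

lemma ichoose_zero {n : ℤ} (h : 0 ≤ n) : ichoose n 0 = 1 := by
  rw [ichoose, if_pos ⟨h, le_refl 0⟩]
  simp

lemma ichoose_one {n : ℤ} (h : 0 ≤ n) : ichoose n 1 = n := by
  rw [ichoose, if_pos ⟨h, by norm_num⟩]
  simp [Nat.choose_one_right, Int.toNat_of_nonneg h]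

lemma ichoose_nat (a b : ℕ) : ichoose a b = (a.choose b : ℤ) := by
  rw [ichoose, if_pos ⟨Int.natCast_nonneg a, Int.natCast_nonneg b⟩]
  simp

lemma ichoose_zero_one : ichoose 0 1 = 0 := by
  rw [ichoose, if_pos ⟨le_refl 0, by norm_num⟩]
  simp

end IchooseLemmas

section HamNLemmas

lemma hamN_x {k l : ℤ} (hk : 0 ≤ k) (hl : 1 ≤ l) : hamN 1 0 k l = -1 := by
  rw [hamN]
  rw [show (1:ℤ) + k - 1 = k by ring, show (0:ℤ) + l - 1 = l - 1 by ring,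
    show (1:ℤ) - 1 = 0 by ring]
  rw [ichoose_neg_right (by norm_num : (0:ℤ) - 1 < 0), ichoose_zero hk,
    ichoose_zero (by omega : (0:ℤ) ≤ l - 1)]
  ring

lemma hamN_x0 {k : ℤ} : hamN 1 0 k 0 = 0 := by
  rw [hamN]
  rw [show (0:ℤ) + 0 - 1 = -1 by ring]
  rw [ichoose_neg_left (by norm_num : (-1:ℤ) < 0), ichoose_neg_left (by norm_num : (-1:ℤ) < 0)]
  ring

lemma hamN_y {k l : ℤ} (hk : 1 ≤ k) (hl : 0 ≤ l) : hamN 0 1 k l = 1 := by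
  rw [hamN]
  rw [show (0:ℤ) + k - 1 = k - 1 by ring, show (1:ℤ) + l - 1 = l by ring,
    show (0:ℤ) - 1 = -1 by ring, show (1:ℤ) - 1 = 0 by ring]
  rw [ichoose_neg_right (by norm_num : (-1:ℤ) < 0), ichoose_zero (by omega : (0:ℤ) ≤ k - 1),
    ichoose_zero hl]
  ring

lemma hamN_y0 {l : ℤ} : hamN 0 1 0 l = 0 := by
  rw [hamN]
  rw [show (0:ℤ) + 0 - 1 = -1 by ring]
  rw [ichoose_neg_left (by norm_num : (-1:ℤ) < 0), ichoose_neg_left (by norm_num : (-1:ℤ) < 0)]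
  ring

lemma hamN_i1 {i k l : ℤ} (hl : 0 ≤ l) :
    hamN i 1 k l = ichoose (i + k - 1) i - ichoose (i + k - 1) (i - 1) * l := by
  rw [hamN]
  rw [show (1:ℤ) + l - 1 = l by ring, show (1:ℤ) - 1 = 0 by ring]
  rw [ichoose_zero hl, ichoose_one hl]
  ring

lemma hamN_q0 {l : ℤ} (hl : 0 ≤ l) : hamN 1 1 0 l = -l := by
  rw [hamN]
  rw [show (1:ℤ) + 0 - 1 = 0 by ring, show (1:ℤ) + l - 1 = l by ring,
    show (1:ℤ) - 1 = 0 by ring]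
  rw [ichoose_zero_one, ichoose_zero hl, ichoose_one hl, ichoose_zero (le_refl 0)]
  ring

end HamNLemmas

lemma sum_Icc_choose_eq (n : ℕ) : ∑ i ∈ Finset.Icc 1 n, n.choose i = 2^n - 1 := by
  have h0 := Nat.sum_range_choose n
  have hr : Finset.range (n+1) = insert 0 (Finset.Icc 1 n) := by
    ext x
    simp only [Finset.mem_range, Finset.mem_insert, Finset.mem_Icc]
    omega
  rw [hr, Finset.sum_insert (by simp)] at h0
  simp only [Nat.choose_zero_right] at h0
  omega

lemma cast_two_pow_sub_one {F : Type*} [Field F] [CharP F 2] {n : ℕ} (hn : 1 ≤ n) :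
    ((2^n - 1 : ℕ) : F) = 1 := by
  have h20 : (2:F) = 0 := by
    have := CharP.cast_eq_zero F 2
    exact_mod_cast this
  have h1 : (1:ℕ) ≤ 2^n := Nat.one_le_two_pow
  have : ((2^n - 1 : ℕ) : F) = (2:F)^n - 1 := by
    push_cast [h1]
    ring
  rw [this, h20, zero_pow (by omega : n ≠ 0), zero_sub, CharTwo.neg_eq]

set_option linter.unusedSectionVars false
section Brackets

variable {F : Type*} [Field F] [CharP F 2]
variable {L : Type*} [LieRing L] [LieAlgebra F L]
variable {n₁ n₂ : ℕ} {X : ℤ → ℤ → L}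

lemma neg_eq_self_char2 {F : Type*} [Field F] [CharP F 2] {L : Type*} [AddCommGroup L]
    [Module F L] (v : L) : -v = v := by
  rw [← one_smul F v, ← neg_smul, CharTwo.neg_eq, one_smul]

lemma two_le_pow2 {n : ℕ} (hn : 0 < n) : (2:ℤ) ≤ 2^n := by
  calc (2:ℤ) = 2^1 := (pow_one 2).symm
  _ ≤ 2^n := pow_le_pow_right₀ (by norm_num) hn

section WithHbr

variable (hbr : ∀ i j k l : ℤ, 0 ≤ i → i < (2 : ℤ) ^ n₁ → 0 ≤ j → j < (2 : ℤ) ^ n₂ →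
      ¬(i = 0 ∧ j = 0) → 0 ≤ k → k < (2 : ℤ) ^ n₁ → 0 ≤ l → l < (2 : ℤ) ^ n₂ →
      ¬(k = 0 ∧ l = 0) →
      ⁅X i j, X k l⁆ = (hamN i j k l : F) • X (i + k - 1) (j + l - 1))
variable (hn₁ : 0 < n₁) (hn₂ : 0 < n₂)

include hbr hn₁ hn₂

lemma brx {k l : ℤ} (hk0 : 0 ≤ k) (hk : k ≤ 2^n₁ - 1) (hl : 1 ≤ l) (hl2 : l ≤ 2^n₂ - 1) :
    ⁅X 1 0, X k l⁆ = X k (l-1) := by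
  have h2 : (2:ℤ) ≤ 2^n₁ := two_le_pow2 hn₁
  have h2' : (2:ℤ) ≤ 2^n₂ := two_le_pow2 hn₂
  have h := hbr 1 0 k l (by norm_num) (by omega) (by norm_num) (by omega)
    (by simp) hk0 (by omega) (by omega) (by omega) (by omega)
  rw [hamN_x hk0 hl] at h
  rw [show (1:ℤ)+k-1 = k by ring, show (0:ℤ)+l-1 = l-1 by ring] at h
  rw [h, Int.cast_neg, Int.cast_one, neg_smul, one_smul, neg_eq_self_char2 (F := F)]

lemma brx0 {k : ℤ} (hk : 1 ≤ k) (hk2 : k ≤ 2^n₁ - 1) : ⁅X 1 0, X k 0⁆ = 0 := by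
  have h2 : (2:ℤ) ≤ 2^n₁ := two_le_pow2 hn₁
  have h2' : (2:ℤ) ≤ 2^n₂ := two_le_pow2 hn₂
  have h := hbr 1 0 k 0 (by norm_num) (by omega) (by norm_num) (by omega)
    (by simp) (by omega) (by omega) (by omega) (by omega) (by omega)
  rw [hamN_x0] at h
  rw [h]; simp

lemma bry {k l : ℤ} (hk : 1 ≤ k) (hk2 : k ≤ 2^n₁ - 1) (hl : 0 ≤ l) (hl2 : l ≤ 2^n₂ - 1) :
    ⁅X 0 1, X k l⁆ = X (k-1) l := by
  have h2 : (2:ℤ) ≤ 2^n₁ := two_le_pow2 hn₁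
  have h2' : (2:ℤ) ≤ 2^n₂ := two_le_pow2 hn₂
  have h := hbr 0 1 k l (by norm_num) (by omega) (by norm_num) (by omega)
    (by simp) (by omega) (by omega) (by omega) (by omega) (by omega)
  rw [hamN_y hk hl] at h
  rw [show (0:ℤ)+k-1 = k-1 by ring, show (1:ℤ)+l-1 = l by ring] at h
  rw [h, Int.cast_one, one_smul]

lemma bry0 {l : ℤ} (hl : 1 ≤ l) (hl2 : l ≤ 2^n₂ - 1) : ⁅X 0 1, X 0 l⁆ = 0 := by
  have h2 : (2:ℤ) ≤ 2^n₁ := two_le_pow2 hn₁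
  have h2' : (2:ℤ) ≤ 2^n₂ := two_le_pow2 hn₂
  have h := hbr 0 1 0 l (by norm_num) (by omega) (by norm_num) (by omega)
    (by simp) (by omega) (by omega) (by omega) (by omega) (by omega)
  rw [hamN_y0] at h
  rw [h]; simp

lemma br_i1k0 {i k : ℤ} (hi : 1 ≤ i) (hi2 : i ≤ 2^n₁ - 1) (hk : 1 ≤ k) (hk2 : k ≤ 2^n₁ - 1) :
    ⁅X i 1, X k 0⁆ = ((ichoose (i+k-1) i : ℤ) : F) • X (i+k-1) 0 := by
  have h2 : (2:ℤ) ≤ 2^n₁ := two_le_pow2 hn₁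
  have h2' : (2:ℤ) ≤ 2^n₂ := two_le_pow2 hn₂
  have h := hbr i 1 k 0 (by omega) (by omega) (by norm_num) (by omega)
    (by omega) (by omega) (by omega) (by omega) (by omega) (by omega)
  rw [hamN_i1 (le_refl 0)] at h
  rw [show (1:ℤ)+0-1 = 0 by ring] at h
  rw [h]; ring_nf

lemma br_chain {i k l : ℤ} (hi : 1 ≤ i) (hi2 : i ≤ 2^n₁ - 1) (hk : 1 ≤ k) (hk2 : k ≤ 2^n₁ - 1)
    (hl : 0 ≤ l) (hl2 : l ≤ 2^n₂ - 1) (hle : ∃ m, l = 2*m) :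
    ⁅X i 1, X k l⁆ = ((ichoose (i+k-1) i : ℤ) : F) • X (i+k-1) l := by
  have h2 : (2:ℤ) ≤ 2^n₁ := two_le_pow2 hn₁
  have h2' : (2:ℤ) ≤ 2^n₂ := two_le_pow2 hn₂
  have h := hbr i 1 k l (by omega) (by omega) (by norm_num) (by omega)
    (by omega) (by omega) (by omega) (by omega) (by omega) (by omega)
  rw [hamN_i1 hl] at h
  rw [show (1:ℤ)+l-1 = l by ring] at h
  rw [h]
  obtain ⟨m, rfl⟩ := hle
  have h20 : (2:F) = 0 := by
    have := CharP.cast_eq_zero F 2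
    exact_mod_cast this
  congr 1
  push_cast
  rw [h20]
  ring

lemma brq0 {l : ℤ} (hl : 1 ≤ l) (hl2 : l ≤ 2^n₂ - 1) (hle : ∃ m, l = 2*m) :
    ⁅X 1 1, X 0 l⁆ = 0 := by
  have h2 : (2:ℤ) ≤ 2^n₁ := two_le_pow2 hn₁
  have h2' : (2:ℤ) ≤ 2^n₂ := two_le_pow2 hn₂
  have h := hbr 1 1 0 l (by norm_num) (by omega) (by norm_num) (by omega)
    (by simp) (by omega) (by omega) (by omega) (by omega) (by omega)
  rw [hamN_q0 (by omega)] at h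
  rw [h]
  obtain ⟨m, rfl⟩ := hle
  have h20 : (2:F) = 0 := by
    have := CharP.cast_eq_zero F 2
    exact_mod_cast this
  have : (((-(2*m) : ℤ)) : F) = 0 := by push_cast; rw [h20]; ring
  rw [this, zero_smul]

lemma brqy : ⁅X 1 1, X 0 1⁆ = X 0 1 := by
  have h2 : (2:ℤ) ≤ 2^n₁ := two_le_pow2 hn₁
  have h2' : (2:ℤ) ≤ 2^n₂ := two_le_pow2 hn₂
  have h := hbr 1 1 0 1 (by norm_num) (by omega) (by norm_num) (by omega)
    (by simp) (by omega) (by omega) (by omega) (by omega) (by omega)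
  rw [hamN_q0 (by norm_num)] at h
  rw [show (1:ℤ)+0-1 = 0 by ring, show (1:ℤ)+1-1 = 1 by ring] at h
  rw [h, Int.cast_neg, Int.cast_one, neg_smul, one_smul, neg_eq_self_char2 (F := F)]

end WithHbr
end Brackets

section Crux
set_option linter.unusedSectionVars false
set_option maxHeartbeats 1000000

variable {F : Type*} [Field F] [CharP F 2]
variable {L : Type*} [LieRing L] [LieAlgebra F L]
variable {n₁ n₂ : ℕ} {X : ℤ → ℤ → L}

lemma crux
    (hn₁ : 0 < n₁) (hn₂ : 0 < n₂)
    (hX0 : ∀ i j : ℤ, (i < 0 ∨ j < 0 ∨ (2 : ℤ) ^ n₁ ≤ i ∨ (2 : ℤ) ^ n₂ ≤ j) → X i j = 0)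
    (hXe : X 0 0 = X ((2 : ℤ) ^ n₁ - 1) ((2 : ℤ) ^ n₂ - 1))
    (B : Module.Basis {ij : ℕ × ℕ // ij.1 < 2 ^ n₁ ∧ ij.2 < 2 ^ n₂ ∧ ij ≠ (0, 0)} F L)
    (hB : ∀ v, B v = X v.1.1 v.1.2)
    (hbr : ∀ i j k l : ℤ, 0 ≤ i → i < (2 : ℤ) ^ n₁ → 0 ≤ j → j < (2 : ℤ) ^ n₂ →
      ¬(i = 0 ∧ j = 0) → 0 ≤ k → k < (2 : ℤ) ^ n₁ → 0 ≤ l → l < (2 : ℤ) ^ n₂ →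
      ¬(k = 0 ∧ l = 0) →
      ⁅X i j, X k l⁆ = (hamN i j k l : F) • X (i + k - 1) (j + l - 1))
    (Ψ : L →ₗ[F] L →ₗ[F] F)
    (Palt : ∀ u, Ψ u u = 0)
    (Pcoc : ∀ u v w, Ψ ⁅u, v⁆ w + Ψ ⁅v, w⁆ u + Ψ ⁅w, u⁆ v = 0)
    (hN1 : ∀ k l : ℤ, 0 ≤ k → k ≤ 2^n₁ - 1 → 1 ≤ l → l ≤ 2^n₂ - 1 → Ψ (X 1 0) (X k l) = 0)
    (hN2 : ∀ k : ℤ, 1 ≤ k → k ≤ 2^n₁ - 1 → Ψ (X 0 1) (X k ((2:ℤ)^n₂ - 1)) = 0) :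
    ∀ u v, Ψ u v = 0 := by
  have h2 : (2:ℤ) ≤ 2^n₁ := two_le_pow2 hn₁
  have h2' : (2:ℤ) ≤ 2^n₂ := two_le_pow2 hn₂
  -- symmetry
  have Psym : ∀ u v, Ψ u v = Ψ v u := by
    intro u v
    have h := Palt (u + v)
    simp only [map_add, LinearMap.add_apply] at h
    rw [Palt u, Palt v] at h
    have h' : Ψ u v + Ψ v u = 0 := by
      rw [← h]; ring
    rw [add_eq_zero_iff_eq_neg.mp h', CharTwo.neg_eq]
  have Pneg : ∀ u v : L, Ψ (-u) v = Ψ u v := by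
    intro u v
    rw [map_neg, LinearMap.neg_apply, CharTwo.neg_eq]
  -- rearranged cocycle identity
  have Jid : ∀ u v w, Ψ ⁅u, v⁆ w = Ψ u ⁅v, w⁆ + Ψ ⁅u, w⁆ v := by
    intro u v w
    have h := Pcoc u v w
    have h1 : Ψ ⁅v, w⁆ u = Ψ u ⁅v, w⁆ := Psym _ _
    have h2 : Ψ ⁅w, u⁆ v = Ψ ⁅u, w⁆ v := by
      rw [← lie_skew u w, Pneg]
    rw [h1, h2] at h
    have := add_eq_zero_iff_eq_neg.mp (by rw [← h]; ring :
      Ψ ⁅u, v⁆ w + (Ψ u ⁅v, w⁆ + Ψ ⁅u, w⁆ v) = 0)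
    rw [this, CharTwo.neg_eq]
  -- Phase 1 : Ψ x (X a 0) = 0
  have phase1 : ∀ a : ℤ, 1 ≤ a → a ≤ 2^n₁ - 1 → Ψ (X 1 0) (X a 0) = 0 := by
    intro a ha ha2
    set n : ℕ := a.toNat with hndef
    have han : (n:ℤ) = a := Int.toNat_of_nonneg (by omega)
    have key : ∀ i : ℤ, 1 ≤ i → i ≤ a →
        Ψ (X i 0) (X (a+1-i) 0) = ((ichoose a i : ℤ) : F) * Ψ (X 1 0) (X a 0) := by
      intro i hi hi2
      have J := Jid (X 1 0) (X i 1) (X (a+1-i) 0)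
      rw [brx hbr hn₁ hn₂ (by omega) (by omega) (by omega) (by omega)] at J
      rw [show (1:ℤ)-1 = 0 by ring] at J
      rw [brx0 hbr hn₁ hn₂ (by omega) (by omega)] at J
      rw [br_i1k0 hbr hn₁ hn₂ (by omega) (by omega) (by omega) (by omega)] at J
      rw [show i + (a+1-i) - 1 = a by ring] at J
      rw [map_smul, map_zero, LinearMap.zero_apply, add_zero, smul_eq_mul] at J
      exact J
    have hsum0 : ∑ i ∈ Finset.Icc 1 n, Ψ (X i 0) (X (a+1-(i:ℤ)) 0) = 0 := by
      apply Finset.sum_involution (g := fun i _ => n + 1 - i)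
      · intro i hi
        simp only [Finset.mem_Icc] at hi
        have hcast : ((n + 1 - i : ℕ) : ℤ) = a + 1 - (i:ℤ) := by omega
        rw [hcast, show a+1-(a+1-(i:ℤ)) = (i:ℤ) by ring, Psym]
        exact CharTwo.add_self_eq_zero _
      · intro i hi hf
        simp only [Finset.mem_Icc] at hi
        intro hg
        apply hf
        have : a + 1 - (i:ℤ) = (i:ℤ) := by omega
        rw [this]
        exact Palt _
      · intro i hi
        simp only [Finset.mem_Icc] at hi ⊢
        omega
      · intro i hi
        simp only [Finset.mem_Icc] at hi
        omega
    have hub : ∀ i ∈ Finset.Icc 1 n, Ψ (X i 0) (X (a+1-(i:ℤ)) 0)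
        = ((ichoose a i : ℤ):F) * Ψ (X 1 0) (X a 0) := by
      intro i hi
      simp only [Finset.mem_Icc] at hi
      exact key i (by omega) (by omega)
    rw [Finset.sum_congr rfl hub, ← Finset.sum_mul] at hsum0
    have hcoef : (∑ i ∈ Finset.Icc 1 n, ((ichoose a (i:ℤ) : ℤ):F)) = 1 := by
      have hc : ∀ i ∈ Finset.Icc 1 n, ((ichoose a (i:ℤ) :ℤ):F) = ((n.choose i : ℕ) : F) := by
        intro i hi
        rw [← han, ichoose_nat]
        push_cast
        ring
      rw [Finset.sum_congr rfl hc, ← Nat.cast_sum]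
      have hs : ∑ i ∈ Finset.Icc 1 n, n.choose i = 2^n - 1 := by
        have h0 := Nat.sum_range_choose n
        have hr : Finset.range (n+1) = insert 0 (Finset.Icc 1 n) := by
          ext x
          simp only [Finset.mem_range, Finset.mem_insert, Finset.mem_Icc]
          omega
        rw [hr, Finset.sum_insert (by simp)] at h0
        simp only [Nat.choose_zero_right] at h0
        omega
      rw [hs]
      have hn1' : 1 ≤ n := by omega
      have h20 : (2:F) = 0 := by
        have := CharP.cast_eq_zero F 2
        exact_mod_cast this
      have hcast2 : ((2^n - 1 : ℕ) : F) = (2:F)^n - 1 := by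
        have : (1:ℕ) ≤ 2^n := Nat.one_le_two_pow
        push_cast [this]
        ring
      rw [hcast2, h20, zero_pow (by omega : n ≠ 0), zero_sub, CharTwo.neg_eq]
    rw [hcoef, one_mul] at hsum0
    exact hsum0
  -- x is in the left kernel
  have hx : ∀ v, Ψ (X 1 0) v = 0 := by
    have h0 : Ψ (X 1 0) = (0 : L →ₗ[F] F) := by
      apply B.ext
      intro idx
      obtain ⟨⟨k, l⟩, hk, hl, hne⟩ := idx
      rw [hB]
      simp only [LinearMap.zero_apply]
      have hkZ : (k:ℤ) ≤ 2^n₁ - 1 := by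
        have : (k:ℤ) < ((2^n₁ : ℕ):ℤ) := by exact_mod_cast hk
        push_cast at this
        omega
      have hlZ : (l:ℤ) ≤ 2^n₂ - 1 := by
        have : (l:ℤ) < ((2^n₂ : ℕ):ℤ) := by exact_mod_cast hl
        push_cast at this
        omega
      by_cases hl0 : l = 0
      · subst hl0
        have hk0 : k ≠ 0 := by
          intro h
          exact hne (by simp [h])
        exact phase1 k (by exact_mod_cast Nat.one_le_iff_ne_zero.mpr hk0) hkZ
      · exact hN1 k l (by positivity) hkZ (by exact_mod_cast Nat.one_le_iff_ne_zero.mpr hl0) hlZ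
    intro v
    rw [h0, LinearMap.zero_apply]
  -- ad x is self-adjoint for Ψ
  have IS : ∀ u v, Ψ ⁅X 1 0, u⁆ v = Ψ u ⁅X 1 0, v⁆ := by
    intro u v
    rw [Jid (X 1 0) u v, hx, zero_add, Psym]
  -- sliding lemmas
  have SLa : ∀ j l k : ℤ, 1 ≤ j → j + 1 ≤ 2^n₂ - 1 → 1 ≤ k → k ≤ 2^n₁ - 1 → 0 ≤ l →
      l ≤ 2^n₂ - 1 → Ψ (X 0 j) (X k l) = Ψ (X 0 (j+1)) (X k (l-1)) := by
    intro j l k hj hj2 hk hk2 hl hl2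
    have h1 := brx hbr hn₁ hn₂ (le_refl 0) (by omega) (by omega : 1 ≤ j+1) (by omega)
    rw [show j+1-1 = j by ring] at h1
    by_cases hl0 : 1 ≤ l
    · have hv := brx hbr hn₁ hn₂ (by omega : (0:ℤ) ≤ k) hk2 hl0 hl2
      rw [← h1, IS, hv]
    · have hl00 : l = 0 := by omega
      subst hl00
      have hv := brx0 hbr hn₁ hn₂ hk hk2
      rw [← h1, IS, hv, show (0:ℤ)-1 = -1 by ring, hX0 k (-1) (by omega), map_zero]
  have SLb : ∀ j l : ℤ, 1 ≤ j → j + 1 ≤ 2^n₂ - 1 → 2 ≤ l → l ≤ 2^n₂ - 1 →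
      Ψ (X 0 j) (X 0 l) = Ψ (X 0 (j+1)) (X 0 (l-1)) := by
    intro j l hj hj2 hl hl2
    have h1 := brx hbr hn₁ hn₂ (le_refl 0) (by omega) (by omega : 1 ≤ j+1) (by omega)
    rw [show j+1-1 = j by ring] at h1
    have hv := brx hbr hn₁ hn₂ (le_refl 0) (by omega) (by omega : 1 ≤ l) hl2
    rw [← h1, IS, hv]
  -- Phase 2 : Ψ y (X k l) = 0 for 1 ≤ k, l ≤ M₂ - 2
  have P2 : ∀ k l : ℤ, 1 ≤ k → k ≤ 2^n₁ - 1 → 0 ≤ l → l ≤ 2^n₂ - 3 →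
      Ψ (X 0 1) (X k l) = 0 := by
    intro k l hk hk2 hl hl2
    have aux : ∀ r : ℕ, (r:ℤ) ≤ l + 1 →
        Ψ (X 0 1) (X k l) = Ψ (X 0 (1+(r:ℤ))) (X k (l-(r:ℤ))) := by
      intro r
      induction r with
      | zero => intro _; norm_num
      | succ m ih =>
        intro hr
        have hmr : ((m:ℤ)) ≤ l := by push_cast at hr; omega
        rw [show (1:ℤ)+((m+1:ℕ):ℤ) = (1+(m:ℤ))+1 by push_cast; ring,
          show l-((m+1:ℕ):ℤ) = (l-(m:ℤ))-1 by push_cast; ring]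
        rw [ih (by omega)]
        exact SLa (1+(m:ℤ)) (l-(m:ℤ)) k (by omega) (by omega) hk hk2 (by omega) (by omega)
    have hfin := aux (l+1).toNat (by rw [Int.toNat_of_nonneg (by omega : (0:ℤ) ≤ l+1)])
    rw [Int.toNat_of_nonneg (by omega : (0:ℤ) ≤ l+1)] at hfin
    rw [hfin, show l-(l+1) = -1 by ring, hX0 k (-1) (by omega), map_zero]
  -- column k = 0
  have Piii : ∀ l : ℤ, 1 ≤ l → l ≤ 2^n₂ - 1 → Ψ (X 0 1) (X 0 l) = 0 := by
    intro l hl hl2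
    rcases Int.even_or_odd l with ⟨m, hm⟩ | ⟨m, hm⟩
    · have hq := Pcoc (X 1 1) (X 0 1) (X 0 l)
      have hb1 : ⁅X 1 1, X 0 1⁆ = X 0 1 := brqy hbr hn₁ hn₂
      have hb2 : ⁅X 0 1, X 0 l⁆ = 0 := bry0 hbr hn₁ hn₂ hl hl2
      have hb3 : ⁅X 0 l, X 1 1⁆ = 0 := by
        rw [← lie_skew, brq0 hbr hn₁ hn₂ hl hl2 ⟨m, by omega⟩, neg_zero]
      rw [hb1, hb2, hb3, map_zero, LinearMap.zero_apply, LinearMap.zero_apply] at hq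
      simpa using hq
    · have hm0 : 0 ≤ m := by omega
      have aux : ∀ r : ℕ, (r:ℤ) ≤ m →
          Ψ (X 0 1) (X 0 l) = Ψ (X 0 (1+(r:ℤ))) (X 0 (l-(r:ℤ))) := by
        intro r
        induction r with
        | zero => intro _; norm_num
        | succ p ih =>
          intro hr
          have hpm : ((p:ℤ)) < m := by push_cast at hr; omega
          rw [show (1:ℤ)+((p+1:ℕ):ℤ) = (1+(p:ℤ))+1 by push_cast; ring,
            show l-((p+1:ℕ):ℤ) = (l-(p:ℤ))-1 by push_cast; ring]
          rw [ih (by omega)]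
          exact SLb (1+(p:ℤ)) (l-(p:ℤ)) (by omega) (by omega) (by omega) (by omega)
      have hfin := aux m.toNat (by rw [Int.toNat_of_nonneg hm0])
      rw [Int.toNat_of_nonneg hm0] at hfin
      rw [hfin, show l - m = 1 + m by omega]
      exact Palt _
  -- Phase 3 : the telescoping chain
  have phase3 : ∀ a : ℤ, 1 ≤ a → a ≤ 2^n₁ - 1 → Ψ (X 0 1) (X a ((2:ℤ)^n₂ - 2)) = 0 := by
    intro a ha ha2
    have heven : ∃ m : ℤ, (2:ℤ)^n₂ - 2 = 2*m := by
      refine ⟨2^(n₂-1) - 1, ?_⟩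
      have : (2:ℤ)^n₂ = 2^(n₂-1) * 2 := by
        rw [← pow_succ]
        congr 1
        omega
      rw [this]
      ring
    set n : ℕ := a.toNat with hndef
    have han : (n:ℤ) = a := Int.toNat_of_nonneg (by omega)
    set t : ℕ → F := fun i => Ψ (X (i:ℤ) 1) (X (a-(i:ℤ)) ((2:ℤ)^n₂ - 2)) with ht
    set W : F := Ψ (X 0 1) (X a ((2:ℤ)^n₂ - 2)) with hW
    have rel : ∀ i : ℕ, (i:ℤ) + 1 ≤ a →
        t (i+1) = t i + ((n.choose (i+1) : ℕ) : F) * W := by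
      intro i hia
      have J := Jid (X 0 1) (X ((i:ℤ)+1) 1) (X (a-(i:ℤ)) ((2:ℤ)^n₂ - 2))
      rw [bry hbr hn₁ hn₂ (by omega) (by omega) (by omega) (by omega)] at J
      rw [show (i:ℤ)+1-1 = (i:ℤ) by ring] at J
      rw [br_chain hbr hn₁ hn₂ (by omega) (by omega) (by omega) (by omega)
        (by omega) (by omega) heven] at J
      rw [show ((i:ℤ)+1) + (a-(i:ℤ)) - 1 = a by ring] at J
      rw [bry hbr hn₁ hn₂ (by omega) (by omega) (by omega) (by omega)] at J
      rw [map_smul, smul_eq_mul] at J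
      rw [Psym (X (a-(i:ℤ)-1) ((2:ℤ)^n₂ - 2)) (X ((i:ℤ)+1) 1)] at J
      -- J : t i = (ichoose a (i+1) : F) * W + t (i+1)  (up to casts)
      have hch : ((ichoose a ((i:ℤ)+1) : ℤ):F) = ((n.choose (i+1) : ℕ):F) := by
        rw [← han, show ((i:ℤ)+1) = ((i+1:ℕ):ℤ) by push_cast; ring, ichoose_nat]
        push_cast
        ring
      rw [hch] at J
      have hJ' : t i = ((n.choose (i+1) : ℕ):F) * W + t (i+1) := by
        rw [ht, hW]
        simp only []
        rw [show a - ((i+1:ℕ):ℤ) = a-(i:ℤ)-1 by push_cast; ring]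
        push_cast
        exact J
      have hself : ((n.choose (i+1) : ℕ):F) * W + ((n.choose (i+1) : ℕ):F) * W = 0 :=
        CharTwo.add_self_eq_zero _
      rw [hJ']
      linear_combination -hself
    have tel : ∀ i : ℕ, (i:ℤ) ≤ a →
        t i = t 0 + ((∑ r ∈ Finset.Icc 1 i, n.choose r : ℕ) : F) * W := by
      intro i
      induction i with
      | zero => intro _; simp
      | succ p ih =>
        intro hp
        have hp' : (p:ℤ) + 1 ≤ a := by push_cast at hp ⊢; omega
        rw [rel p hp', ih (by omega)]
        have hins : Finset.Icc 1 (p+1) = insert (p+1) (Finset.Icc 1 p) := by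
          ext x
          simp only [Finset.mem_Icc, Finset.mem_insert]
          omega
        rw [hins, Finset.sum_insert (by simp)]
        push_cast
        ring
    have htn := tel n (by omega)
    rw [sum_Icc_choose_eq, cast_two_pow_sub_one (by omega), one_mul] at htn
    -- slide t 0 to the corner
    have aux3 : ∀ r : ℕ, (r:ℤ) ≤ 2^n₂ - 2 →
        t 0 = Ψ (X 0 (1+(r:ℤ))) (X a ((2:ℤ)^n₂ - 2 - (r:ℤ))) := by
      intro r
      induction r with
      | zero => intro _; rw [ht]; norm_num
      | succ p ih =>
        intro hr
        have hpr : (p:ℤ) + 1 ≤ 2^n₂ - 2 := by push_cast at hr; omega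
        rw [show (1:ℤ)+((p+1:ℕ):ℤ) = (1+(p:ℤ))+1 by push_cast; ring,
          show (2:ℤ)^n₂-2-((p+1:ℕ):ℤ) = ((2:ℤ)^n₂-2-(p:ℤ))-1 by push_cast; ring]
        rw [ih (by omega)]
        exact SLa (1+(p:ℤ)) ((2:ℤ)^n₂-2-(p:ℤ)) a (by omega) (by omega) (by omega)
          (by omega) (by omega) (by omega)
    have ht0 := aux3 ((2:ℤ)^n₂ - 2).toNat
      (by rw [Int.toNat_of_nonneg (by omega : (0:ℤ) ≤ 2^n₂-2)])
    rw [Int.toNat_of_nonneg (by omega : (0:ℤ) ≤ 2^n₂-2)] at ht0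
    rw [show (1:ℤ)+((2:ℤ)^n₂-2) = 2^n₂-1 by ring, sub_self] at ht0
    -- compute t n
    have htn2 : t n = Ψ (X 0 ((2:ℤ)^n₂-1)) (X a 0) := by
      have e1 : t n = Ψ (X a 1) (X 0 ((2:ℤ)^n₂-2)) := by
        rw [ht]
        simp only []
        rw [han, sub_self]
      have hbx := brx hbr hn₁ hn₂ (le_refl 0) (by omega : (0:ℤ) ≤ 2^n₁-1)
        (by omega : 1 ≤ (2:ℤ)^n₂-1) (by omega)
      rw [show (2:ℤ)^n₂-1-1 = 2^n₂-2 by ring] at hbx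
      have hbx2 := brx hbr hn₁ hn₂ (by omega : (0:ℤ) ≤ a) (by omega) (le_refl 1) (by omega)
      rw [show (1:ℤ)-1 = 0 by ring] at hbx2
      rw [e1, ← hbx, ← IS, hbx2, Psym]
    have hts : t n = t 0 := by rw [htn2, ht0]
    rw [hts] at htn
    exact (left_eq_add.mp htn)
  -- y is in the left kernel
  have hy : ∀ v, Ψ (X 0 1) v = 0 := by
    have h0 : Ψ (X 0 1) = (0 : L →ₗ[F] F) := by
      apply B.ext
      intro idx
      obtain ⟨⟨k, l⟩, hk, hl, hne⟩ := idx
      rw [hB]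
      simp only [LinearMap.zero_apply]
      have hkZ : (k:ℤ) ≤ 2^n₁ - 1 := by
        have : (k:ℤ) < ((2^n₁ : ℕ):ℤ) := by exact_mod_cast hk
        push_cast at this
        omega
      have hlZ : (l:ℤ) ≤ 2^n₂ - 1 := by
        have : (l:ℤ) < ((2^n₂ : ℕ):ℤ) := by exact_mod_cast hl
        push_cast at this
        omega
      by_cases hk0 : k = 0
      · subst hk0
        have hl0 : l ≠ 0 := by
          intro h
          exact hne (by simp [h])
        exact Piii l (by exact_mod_cast Nat.one_le_iff_ne_zero.mpr hl0) hlZ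
      · have hk1 : 1 ≤ (k:ℤ) := by exact_mod_cast Nat.one_le_iff_ne_zero.mpr hk0
        by_cases hc1 : (l:ℤ) ≤ 2^n₂ - 3
        · exact P2 k l hk1 hkZ (by positivity) hc1
        · by_cases hc2 : (l:ℤ) = 2^n₂ - 2
          · rw [hc2]
            exact phase3 k hk1 hkZ
          · have : (l:ℤ) = 2^n₂ - 1 := by omega
            rw [this]
            exact hN2 k hk1 hkZ
    intro v
    rw [h0, LinearMap.zero_apply]
  -- the left kernel is a subalgebra
  have Zbr : ∀ u w : L, (∀ v, Ψ u v = 0) → (∀ v, Ψ w v = 0) → ∀ v, Ψ ⁅u, w⁆ v = 0 := by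
    intro u w hu hw v
    rw [Jid u w v, hu, Psym, hw, add_zero]
  -- generation, top row
  have gen1 : ∀ r : ℕ, (r:ℤ) ≤ 2^n₂ - 1 → ∀ v, Ψ (X ((2:ℤ)^n₁-1) ((2:ℤ)^n₂-1-(r:ℤ))) v = 0 := by
    intro r
    induction r with
    | zero =>
      intro _ v
      have he : ⁅X 1 0, X 0 1⁆ = X ((2:ℤ)^n₁-1) ((2:ℤ)^n₂-1) := by
        rw [brx hbr hn₁ hn₂ (le_refl 0) (by omega) (le_refl 1) (by omega)]
        rw [show (1:ℤ)-1 = 0 by ring]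
        exact hXe
      simp only [Nat.cast_zero, sub_zero]
      rw [← he]
      exact Zbr _ _ hx hy v
    | succ p ih =>
      intro hr v
      have hpr : (p:ℤ) + 1 ≤ 2^n₂ - 1 := by push_cast at hr; omega
      have hbrr := brx hbr hn₁ hn₂ (by omega : (0:ℤ) ≤ 2^n₁-1) (le_refl _)
        (by omega : 1 ≤ (2:ℤ)^n₂-1-(p:ℤ)) (by omega)
      rw [show (2:ℤ)^n₂-1-((p+1:ℕ):ℤ) = ((2:ℤ)^n₂-1-(p:ℤ))-1 by push_cast; ring, ← hbrr]
      exact Zbr _ _ hx (fun v' => ih (by omega) v') v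
  -- generation, all rows
  have gen2 : ∀ s : ℕ, (s:ℤ) ≤ 2^n₁-1 → ∀ l : ℤ, 0 ≤ l → l ≤ 2^n₂-1 →
      ¬((2:ℤ)^n₁-1-(s:ℤ) = 0 ∧ l = 0) → ∀ v, Ψ (X ((2:ℤ)^n₁-1-(s:ℤ)) l) v = 0 := by
    intro s
    induction s with
    | zero =>
      intro _ l hl hl2 _ v
      have := gen1 ((2:ℤ)^n₂-1-l).toNat
        (by rw [Int.toNat_of_nonneg (by omega)]; omega) v
      rw [Int.toNat_of_nonneg (by omega : (0:ℤ) ≤ 2^n₂-1-l),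
        show (2:ℤ)^n₂-1-((2:ℤ)^n₂-1-l) = l by ring] at this
      simpa using this
    | succ p ih =>
      intro hs l hl hl2 hne v
      have hps : (p:ℤ) + 1 ≤ 2^n₁ - 1 := by push_cast at hs; omega
      have hbrr := bry hbr hn₁ hn₂ (k := (2:ℤ)^n₁-1-(p:ℤ)) (by omega) (by omega) hl hl2
      rw [show (2:ℤ)^n₁-1-((p+1:ℕ):ℤ) = ((2:ℤ)^n₁-1-(p:ℤ))-1 by push_cast; ring, ← hbrr]
      exact Zbr _ _ hy (fun v' => ih (by omega) l hl hl2 (by omega) v') v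
  -- conclusion
  have hfin : Ψ = 0 := by
    apply B.ext
    intro idx
    obtain ⟨⟨k, l⟩, hk, hl, hne⟩ := idx
    rw [hB]
    apply LinearMap.ext
    intro v'
    simp only [LinearMap.zero_apply]
    have hkZ : (k:ℤ) ≤ 2^n₁ - 1 := by
      have : (k:ℤ) < ((2^n₁ : ℕ):ℤ) := by exact_mod_cast hk
      push_cast at this
      omega
    have hlZ : (l:ℤ) ≤ 2^n₂ - 1 := by
      have : (l:ℤ) < ((2^n₂ : ℕ):ℤ) := by exact_mod_cast hl
      push_cast at this
      omega
    have hneZ : ¬((k:ℤ) = 0 ∧ (l:ℤ) = 0) := by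
      rintro ⟨h1, h2⟩
      have hk0 : k = 0 := by exact_mod_cast h1
      have hl0 : l = 0 := by exact_mod_cast h2
      exact hne (by rw [hk0, hl0])
    have := gen2 ((2:ℤ)^n₁-1-(k:ℤ)).toNat
      (by rw [Int.toNat_of_nonneg (by omega)]; omega) l (by positivity) hlZ
      (by rw [Int.toNat_of_nonneg (by omega : (0:ℤ) ≤ 2^n₁-1-(k:ℤ))]; omega) v'
    rw [Int.toNat_of_nonneg (by omega : (0:ℤ) ≤ 2^n₁-1-(k:ℤ)),
      show (2:ℤ)^n₁-1-((2:ℤ)^n₁-1-(k:ℤ)) = (k:ℤ) by ring] at this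
    exact this
  intro u v
  rw [hfin]
  simp
end Crux

set_option maxHeartbeats 1000000 in
/-- In characteristic two, every 2-cocycle of `L = H(2:(n₁,n₂);ω₂)`
with values in the trivial module is a 2-coboundary; that is, `H²(L,F) = 0`. -/
theorem stmt_10 (n₁ n₂ : ℕ) (hn₁ : 0 < n₁) (hn₂ : 0 < n₂)
    (F : Type*) [Field F] [CharP F 2]
    (L : Type*) [LieRing L] [LieAlgebra F L]
    (X : ℤ → ℤ → L)
    (hX0 : ∀ i j : ℤ, (i < 0 ∨ j < 0 ∨ (2 : ℤ) ^ n₁ ≤ i ∨ (2 : ℤ) ^ n₂ ≤ j) → X i j = 0)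
    (hXe : X 0 0 = X ((2 : ℤ) ^ n₁ - 1) ((2 : ℤ) ^ n₂ - 1))
    (B : Module.Basis {ij : ℕ × ℕ // ij.1 < 2 ^ n₁ ∧ ij.2 < 2 ^ n₂ ∧ ij ≠ (0, 0)} F L)
    (hB : ∀ v, B v = X v.1.1 v.1.2)
    (hbr : ∀ i j k l : ℤ, 0 ≤ i → i < (2 : ℤ) ^ n₁ → 0 ≤ j → j < (2 : ℤ) ^ n₂ →
      ¬(i = 0 ∧ j = 0) → 0 ≤ k → k < (2 : ℤ) ^ n₁ → 0 ≤ l → l < (2 : ℤ) ^ n₂ →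
      ¬(k = 0 ∧ l = 0) →
      ⁅X i j, X k l⁆ = (hamN i j k l : F) • X (i + k - 1) (j + l - 1)) :
    ∀ φ : L →ₗ[F] L →ₗ[F] F, IsTwoCocycle φ → IsTwoCoboundary φ := by
  intro φ hφ
  obtain ⟨halt, hcoc⟩ := hφ
  have h2 : (2:ℤ) ≤ 2^n₁ := two_le_pow2 hn₁
  have h2' : (2:ℤ) ≤ 2^n₂ := two_le_pow2 hn₂
  set val : ℕ × ℕ → F := fun p =>
    if ((p.2:ℤ)) < 2^n₂ - 1 then φ (X 1 0) (X p.1 ((p.2:ℤ)+1))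
    else if ((p.1:ℤ)) < 2^n₁ - 1 then φ (X 0 1) (X ((p.1:ℤ)+1) p.2)
    else φ (X 1 0) (X 0 1) with hval
  set f : L →ₗ[F] F := B.constr F (fun idx => val idx.1) with hf
  have hXB : ∀ k l : ℤ, 0 ≤ k → k ≤ 2^n₁-1 → 0 ≤ l → l ≤ 2^n₂-1 → ¬(k = 0 ∧ l = 0) →
      f (X k l) = val (k.toNat, l.toNat) := by
    intro k l hk hk2 hl hl2 hne
    have hm1 : (k.toNat, l.toNat).1 < 2^n₁ := by
      have : ((2:ℕ)^n₁ : ℤ) = (2:ℤ)^n₁ := by push_cast; ring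
      omega
    have hm2 : (k.toNat, l.toNat).2 < 2^n₂ := by
      have : ((2:ℕ)^n₂ : ℤ) = (2:ℤ)^n₂ := by push_cast; ring
      omega
    have hm3 : (k.toNat, l.toNat) ≠ (0, 0) := by
      intro h
      rw [Prod.mk.injEq] at h
      exact hne (by omega)
    have hXb : X k l = B ⟨(k.toNat, l.toNat), hm1, hm2, hm3⟩ := by
      rw [hB]
      simp only []
      rw [Int.toNat_of_nonneg hk, Int.toNat_of_nonneg hl]
    rw [hXb, hf, Module.Basis.constr_basis]
  set G : L →ₗ[F] L →ₗ[F] F := LinearMap.mk₂ F (fun u v => f ⁅u, v⁆)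
    (fun u u' v => by show f ⁅u + u', v⁆ = f ⁅u, v⁆ + f ⁅u', v⁆; rw [add_lie, map_add])
    (fun c u v => by show f ⁅c • u, v⁆ = c • f ⁅u, v⁆; rw [smul_lie, map_smul])
    (fun u v v' => by show f ⁅u, v + v'⁆ = f ⁅u, v⁆ + f ⁅u, v'⁆; rw [lie_add, map_add])
    (fun c u v => by show f ⁅u, c • v⁆ = c • f ⁅u, v⁆; rw [lie_smul, map_smul]) with hG
  set Ψ : L →ₗ[F] L →ₗ[F] F := φ - G with hΨ
  have hPsiApp : ∀ u v, Ψ u v = φ u v - f ⁅u,v⁆ := by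
    intro u v
    rw [hΨ, LinearMap.sub_apply, LinearMap.sub_apply, hG, LinearMap.mk₂_apply]
  have Palt : ∀ u, Ψ u u = 0 := by
    intro u
    rw [hPsiApp, halt, lie_self, map_zero, sub_zero]
  have Pcoc : ∀ u v w, Ψ ⁅u,v⁆ w + Ψ ⁅v,w⁆ u + Ψ ⁅w,u⁆ v = 0 := by
    intro u v w
    rw [hPsiApp, hPsiApp, hPsiApp]
    have hj : ⁅⁅u,v⁆,w⁆ + ⁅⁅v,w⁆,u⁆ + ⁅⁅w,u⁆,v⁆ = (0:L) := by
      have h1 := lie_jacobi u v w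
      rw [← lie_skew u ⁅v,w⁆, ← lie_skew v ⁅w,u⁆, ← lie_skew w ⁅u,v⁆] at h1
      rw [show -⁅⁅v,w⁆,u⁆ + -⁅⁅w,u⁆,v⁆ + -⁅⁅u,v⁆,w⁆
        = -(⁅⁅u,v⁆,w⁆ + ⁅⁅v,w⁆,u⁆ + ⁅⁅w,u⁆,v⁆) by abel] at h1
      exact neg_eq_zero.mp h1
    have hfj : f ⁅⁅u,v⁆,w⁆ + f ⁅⁅v,w⁆,u⁆ + f ⁅⁅w,u⁆,v⁆ = 0 := by
      rw [← map_add, ← map_add, hj, map_zero]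
    linear_combination (hcoc u v w) - hfj
  have hN1 : ∀ k l : ℤ, 0 ≤ k → k ≤ 2^n₁-1 → 1 ≤ l → l ≤ 2^n₂-1 → Ψ (X 1 0) (X k l) = 0 := by
    intro k l hk hk2 hl hl2
    rw [hPsiApp, brx hbr hn₁ hn₂ hk hk2 hl hl2]
    by_cases hc : k = 0 ∧ l = 1
    · obtain ⟨rfl, rfl⟩ := hc
      rw [show (1:ℤ)-1 = 0 by norm_num, hXe,
        hXB ((2:ℤ)^n₁-1) ((2:ℤ)^n₂-1) (by omega) (le_refl _) (by omega) (le_refl _) (by omega),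
        hval]
      simp only []
      rw [if_neg (by rw [Int.toNat_of_nonneg (by omega : (0:ℤ) ≤ 2^n₂-1)]; omega),
        if_neg (by rw [Int.toNat_of_nonneg (by omega : (0:ℤ) ≤ 2^n₁-1)]; omega)]
      exact sub_self _
    · rw [hXB k (l-1) hk hk2 (by omega) (by omega) (by omega), hval]
      simp only []
      rw [if_pos (by rw [Int.toNat_of_nonneg (by omega : (0:ℤ) ≤ l-1)]; omega)]
      rw [Int.toNat_of_nonneg hk, Int.toNat_of_nonneg (by omega : (0:ℤ) ≤ l-1),
        show l-1+1 = l by ring]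
      exact sub_self _
  have hN2 : ∀ k : ℤ, 1 ≤ k → k ≤ 2^n₁-1 → Ψ (X 0 1) (X k ((2:ℤ)^n₂ - 1)) = 0 := by
    intro k hk hk2
    rw [hPsiApp, bry hbr hn₁ hn₂ hk hk2 (by omega) (le_refl _)]
    rw [hXB (k-1) ((2:ℤ)^n₂-1) (by omega) (by omega) (by omega) (le_refl _) (by omega), hval]
    simp only []
    rw [if_neg (by rw [Int.toNat_of_nonneg (by omega : (0:ℤ) ≤ 2^n₂-1)]; omega),
      if_pos (by rw [Int.toNat_of_nonneg (by omega : (0:ℤ) ≤ k-1)]; omega)]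
    rw [Int.toNat_of_nonneg (by omega : (0:ℤ) ≤ k-1),
      Int.toNat_of_nonneg (by omega : (0:ℤ) ≤ 2^n₂-1), show k-1+1 = k by ring]
    exact sub_self _
  refine ⟨f, ?_⟩
  intro u v
  have hz := crux hn₁ hn₂ hX0 hXe B hB hbr Ψ Palt Pcoc hN1 hN2 u v
  rw [hPsiApp] at hz
  exact sub_eq_zero.mp hz
end
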